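/- arXiv:2605.01682 — 2 statements merged into one kernel-verified Lean document; each statement's English description precedes it below -/
import Mathlib

section
/- A positive integer n is a cyclic number (i.e., every group of order n is cyclic) if and only if gcd(n, φ(n)) = 1, where φ is Euler's totient function. -/
lemma squarefree_of_coprime_totient {n : ℕ} (h : Nat.Coprime n n.totient) :
    Squarefree n := by
  rw [Nat.squarefree_iff_prime_squarefree]
  intro p hp hdvd
  have h1 : p ∣ n.totient := by
    refine dvd_trans ?_ (Nat.totient_dvd_of_dvd hdvd)
    have : p * p = p ^ 2 := by ring
    rw [this, Nat.totient_prime_pow hp (by norm_num)]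
    simpa using Dvd.intro _ rfl
  have h2 : p ∣ n := dvd_trans (Dvd.intro p rfl) hdvd
  have : p ∣ 1 := h ▸ Nat.dvd_gcd h2 h1
  exact hp.one_lt.ne' (Nat.eq_one_of_dvd_one this)

lemma exists_prime_dvd_sub_one {p : ℕ} (hp : p.Prime) :
    ∀ m : ℕ, ¬ p ∣ m → p ∣ m.totient → ∃ q, q.Prime ∧ q ∣ m ∧ p ∣ q - 1 := by
  intro m
  induction m using Nat.strong_induction_on with
  | _ m ih =>
    intro hpm hptot
    rcases Nat.eq_zero_or_pos m with rfl | hm0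
    · exact absurd (dvd_zero p) hpm
    rcases Nat.lt_or_ge m 2 with hm1 | hm2
    · interval_cases m
      simp at hptot
      exact absurd hptot hp.one_lt.ne'
    have hq : m.minFac.Prime := Nat.minFac_prime (by omega)
    set q := m.minFac with hqdef
    set k := m.factorization q with hkdef
    have hk1 : 1 ≤ k := hq.factorization_pos_of_dvd (by omega) (Nat.minFac_dvd m)
    set m' := m / q ^ k with hm'def
    have hsplit : q ^ k * m' = m := Nat.ordProj_mul_ordCompl_eq_self m q
    have hcop : Nat.Coprime (q ^ k) m' := Nat.Coprime.pow_left _ (Nat.coprime_ordCompl hq (by omega))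
    have htot : m.totient = (q ^ k).totient * m'.totient := by
      rw [← hsplit, Nat.totient_mul hcop]
    rw [htot] at hptot
    rcases (Nat.Prime.dvd_mul hp).mp hptot with h1 | h2
    · rw [Nat.totient_prime_pow hq hk1] at h1
      rcases (Nat.Prime.dvd_mul hp).mp h1 with h3 | h4
      · have hpq : p = q := (Nat.prime_dvd_prime_iff_eq hp hq).mp (hp.dvd_of_dvd_pow h3)
        exact absurd (hpq ▸ Nat.minFac_dvd m) hpm
      · exact ⟨q, hq, Nat.minFac_dvd m, h4⟩
    · have hm'pos : 0 < m' := Nat.pos_of_ne_zero fun h => by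
        rw [h, mul_zero] at hsplit; omega
      have hm'lt : m' < m := by
        have hq1 : 1 < q ^ k := Nat.one_lt_pow (by omega) hq.one_lt
        calc m' = 1 * m' := (one_mul m').symm
        _ < q ^ k * m' := by exact (Nat.mul_lt_mul_right hm'pos).mpr hq1
        _ = m := hsplit
      have hpm' : ¬ p ∣ m' := fun h => hpm (h.trans ⟨q ^ k, by rw [← hsplit]; ring⟩)
      obtain ⟨r, hr, hrm', hrp⟩ := ih m' hm'lt hpm' h2
      exact ⟨r, hr, hrm'.trans ⟨q ^ k, by rw [← hsplit]; ring⟩, hrp⟩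

/-- Noncyclic group of order p*p*m. -/
lemma exists_noncyclic_sq {p : ℕ} (hp : p.Prime) (m : ℕ) (hm : 0 < m) :
    ∃ (G : Type) (_ : Group G) (_ : Fintype G), Fintype.card G = p * p * m ∧ ¬ IsCyclic G := by
  haveI : NeZero p := ⟨hp.ne_zero⟩
  haveI : NeZero m := ⟨hm.ne'⟩
  refine ⟨Multiplicative (ZMod p × ZMod p × ZMod m), inferInstance, inferInstance, ?_, ?_⟩
  · simp [mul_assoc]
  · intro h
    obtain ⟨g, hg⟩ := h.exists_ofOrder_eq_natCard
    have hdvd : orderOf g ∣ p * m := by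
      apply orderOf_dvd_of_pow_eq_one
      have : (p * m) • (Multiplicative.toAdd g) = 0 := by
        obtain ⟨a, b, c⟩ := Multiplicative.toAdd g
        refine Prod.ext ?_ (Prod.ext ?_ ?_) <;>
          simp [nsmul_eq_mul, (ZMod.natCast_eq_zero_iff _ _).mpr,
            Dvd.intro, Dvd.intro_left]
      rw [← ofAdd_toAdd g, ← ofAdd_nsmul, this]
      rfl
    rw [hg] at hdvd
    have hcard : Nat.card (Multiplicative (ZMod p × ZMod p × ZMod m)) = p * (p * m) := by
      simp [Nat.card_eq_fintype_card, mul_assoc]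
    rw [hcard] at hdvd
    have := Nat.le_of_dvd (Nat.mul_pos hp.pos hm) hdvd
    nlinarith [hp.two_le, hm]

open SemidirectProduct in
/-- Noncyclic group of order p*q*m when p ∣ q-1. -/
lemma exists_noncyclic_sd {p q : ℕ} (hp : p.Prime) (hq : q.Prime) (hpq : p ∣ q - 1)
    (m : ℕ) (hm : 0 < m) :
    ∃ (G : Type) (_ : Group G) (_ : Fintype G), Fintype.card G = p * q * m ∧ ¬ IsCyclic G := by
  haveI : NeZero q := ⟨hq.ne_zero⟩
  haveI : NeZero m := ⟨hm.ne'⟩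
  haveI : Fact q.Prime := ⟨hq⟩
  haveI : Fact p.Prime := ⟨hp⟩
  -- a unit of order p
  obtain ⟨u, hu⟩ := exists_prime_orderOf_dvd_card (G := (ZMod q)ˣ) p
    (by rw [ZMod.card_units_eq_totient, Nat.totient_prime hq]; exact hpq)
  -- the automorphism of Multiplicative (ZMod q) induced by u
  let j : Multiplicative (AddAut (ZMod q)) →* MulAut (Multiplicative (ZMod q)) :=
    { toFun := fun f => AddEquiv.toMultiplicative (Multiplicative.toAdd f)
      map_one' := rfl
      map_mul' := fun f g => rfl }
  have hjinj : Function.Injective j := fun f g h => by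
    apply Multiplicative.toAdd.injective
    ext x; exact congrArg (fun e => (e : MulAut (Multiplicative (ZMod q))) (Multiplicative.ofAdd x)) h
  let t : (ZMod q)ˣ →* MulAut (Multiplicative (ZMod q)) :=
    j.comp (DistribMulAction.toAddAut (ZMod q)ˣ (ZMod q))
  have htinj : Function.Injective t := by
    intro a b h
    have := congrArg (fun e => Multiplicative.toAdd ((e : MulAut _) (Multiplicative.ofAdd (1 : ZMod q)))) h
    have h' : (a : ZMod q) * 1 = (b : ZMod q) * 1 := this
    exact Units.ext (by simpa using h')
  set a : MulAut (Multiplicative (ZMod q)) := t u with ha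
  have haord : orderOf a = p := by rw [ha, orderOf_injective t htinj, hu]
  -- the acting group: zpowers a
  let A := Subgroup.zpowers a
  let φ : A →* MulAut (Multiplicative (ZMod q)) := A.subtype
  haveI hfinMA : Finite (MulAut (Multiplicative (ZMod q))) :=
    Finite.of_injective MulEquiv.toEquiv (fun e f h => by ext x; exact congrFun (congrArg Equiv.toFun h) x)
  let H := Multiplicative (ZMod q) ⋊[φ] A
  let eH : H ≃ Multiplicative (ZMod q) × A :=
    ⟨fun x => (x.left, x.right), fun x => ⟨x.1, x.2⟩, fun x => rfl, fun x => rfl⟩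
  haveI : Finite H := Finite.of_equiv _ eH.symm
  haveI : Fintype H := Fintype.ofFinite H
  have hcardH : Nat.card H = q * p := by
    rw [Nat.card_congr eH, Nat.card_prod, Nat.card_zpowers, haord]
    simp [Nat.card_eq_fintype_card]
  -- two non-commuting elements of H
  set nn : Multiplicative (ZMod q) := Multiplicative.ofAdd 1 with hnn
  set g : A := ⟨a, Subgroup.mem_zpowers a⟩ with hg
  have hnc : SemidirectProduct.inr (φ := φ) g * SemidirectProduct.inl nn ≠
      SemidirectProduct.inl nn * SemidirectProduct.inr g := by
    intro hcon
    have h1 := congrArg SemidirectProduct.left hcon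
    simp only [SemidirectProduct.mul_left, SemidirectProduct.left_inl,
      SemidirectProduct.left_inr, SemidirectProduct.right_inl, SemidirectProduct.right_inr,
      one_mul, map_one, MulAut.one_apply, mul_one] at h1
    have h2 : (φ g) nn = nn := h1
    have h3 : (u : ZMod q) * 1 = 1 := by
      have := congrArg Multiplicative.toAdd h2
      exact this
    have : u = 1 := Units.ext (by simpa using h3)
    rw [this] at hu
    simp at hu
    exact hp.one_lt.ne' hu.symm
  refine ⟨H × Multiplicative (ZMod m), inferInstance, inferInstance, ?_, ?_⟩
  · have hm' : Nat.card (Multiplicative (ZMod m)) = m := by simp [Nat.card_eq_fintype_card]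
    rw [← Nat.card_eq_fintype_card, Nat.card_prod, hcardH, hm']
    ring
  · intro hcyc
    letI := hcyc.commGroup
    have := mul_comm ((SemidirectProduct.inr (φ := φ) g, 1) : H × Multiplicative (ZMod m))
      ((SemidirectProduct.inl nn, 1) : H × Multiplicative (ZMod m))
    exact hnc (congrArg Prod.fst this)


/-- Every group of order `n` with `gcd(n, φ(n)) = 1` is cyclic. -/
lemma isCyclic_of_coprime_totient :
    ∀ n : ℕ, Nat.Coprime n n.totient →
      ∀ (G : Type) [Group G] [Fintype G], Fintype.card G = n → IsCyclic G := by
  intro n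
  induction n using Nat.strong_induction_on with
  | _ n ih =>
    intro h G _ _ hcard
    rcases Nat.lt_or_ge n 2 with hn1 | hn2
    · -- card ≤ 1
      haveI : Subsingleton G := Fintype.card_le_one_iff_subsingleton.mp (by omega)
      infer_instance
    have hn0 : 0 < n := by omega
    have hsf : Squarefree n := squarefree_of_coprime_totient h
    set p := n.minFac with hpdef
    have hp : p.Prime := Nat.minFac_prime (by omega)
    haveI : Fact p.Prime := ⟨hp⟩
    have hpn : p ∣ n := Nat.minFac_dvd n
    have hNcard : Nat.card G = n := by rw [Nat.card_eq_fintype_card, hcard]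
    -- Sylow p-subgroup has order p
    obtain ⟨P⟩ : Nonempty (Sylow p G) := inferInstance
    have hPcard : Nat.card P = p := by
      rw [P.card_eq_multiplicity, hNcard]
      have h1 : n.factorization p ≤ 1 := hsf.natFactorization_le_one p
      have h2 : 1 ≤ n.factorization p := hp.factorization_pos_of_dvd (by omega) hpn
      rw [(by omega : n.factorization p = 1), pow_one]
    haveI hPcyc : IsCyclic P := isCyclic_of_prime_card hPcard
    -- order-killing argument, abstracted
    have key : ∀ (A B : Type) [Group A] [Group B] [Finite B], Nat.card A ∣ n →
        Nat.card B ∣ n.totient → ∀ (f : A →* B) (g : A), f g = 1 := by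
      intro A B _ _ _ hA hB f g
      have h1 : orderOf (f g) ∣ n := (orderOf_map_dvd f g).trans ((orderOf_dvd_natCard g).trans hA)
      have h2 : orderOf (f g) ∣ n.totient := (orderOf_dvd_natCard (f g)).trans hB
      have : orderOf (f g) ∣ 1 := h ▸ Nat.dvd_gcd h1 h2
      exact orderOf_eq_one_iff.mp (Nat.eq_one_of_dvd_one this)
    -- normalizer ≤ centralizer
    have hNC : Subgroup.normalizer ((P : Subgroup G) : Set G) ≤ Subgroup.centralizer ((P : Subgroup G) : Set G) := by
      intro g hg
      have h1 : ∀ x, (P : Subgroup G).normalizerMonoidHom x = 1 := by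
        intro x
        refine key _ (MulAut P) ?_ ?_ _ x
        · exact (Subgroup.card_subgroup_dvd_card _).trans (hNcard ▸ dvd_rfl)
        · rw [IsCyclic.card_mulAut, hPcard]
          exact Nat.totient_dvd_of_dvd hpn
      have := h1 ⟨g, hg⟩
      have hker : (⟨g, hg⟩ : Subgroup.normalizer ((P : Subgroup G) : Set G)) ∈ (P : Subgroup G).normalizerMonoidHom.ker := this
      rw [Subgroup.normalizerMonoidHom_ker] at hker
      exact hker
    -- Burnside's normal p-complement
    haveI : (P : Subgroup G).FiniteIndex := inferInstance
    set K := (MonoidHom.transferSylow P hNC).ker with hKdef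
    have hcompl : K.IsComplement' P := MonoidHom.ker_transferSylow_isComplement' P hNC
    have hKP : Nat.card K * p = n := by
      rw [← hPcard, hcompl.card_mul, hNcard]
    set m := Nat.card K with hmdef
    have hmn : m ∣ n := ⟨p, hKP.symm⟩
    have hmcop : Nat.Coprime m m.totient :=
      Nat.eq_one_of_dvd_one (h ▸ Nat.dvd_gcd (dvd_trans (Nat.gcd_dvd_left _ _) hmn)
        ((Nat.gcd_dvd_right _ _).trans (Nat.totient_dvd_of_dvd hmn)))
    have hmlt : m < n := by
      have := hp.two_le
      have hm0 : 0 < m := Nat.card_pos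
      nlinarith
    haveI : Fintype K := Fintype.ofFinite _
    haveI hKcyc : IsCyclic K := ih m hmlt hmcop K (by rw [← Nat.card_eq_fintype_card])
    -- K is central
    have hKcentral : K ≤ Subgroup.center G := by
      intro k hk
      rw [Subgroup.mem_center_iff]
      intro g
      have h1 : MulAut.conjNormal (H := K) g = 1 := by
        refine key _ (MulAut K) (hNcard ▸ dvd_rfl) ?_ MulAut.conjNormal g
        · rw [IsCyclic.card_mulAut]
          exact Nat.totient_dvd_of_dvd hmn
      have h2 : ((MulAut.conjNormal (H := K) g ⟨k, hk⟩ : K) : G) = (((1 : MulAut K) ⟨k, hk⟩ : K) : G) := by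
        rw [h1]
      simp only [MulAut.conjNormal_apply, MulAut.one_apply] at h2
      exact mul_inv_eq_iff_eq_mul.mp h2
    -- quotient by center is cyclic of order dividing p
    haveI hZcyc : IsCyclic (G ⧸ Subgroup.center G) := by
      apply isCyclic_of_card_dvd_prime (p := p)
      have h1 : (Subgroup.center G).index ∣ K.index := Subgroup.index_dvd_of_le hKcentral
      have h2 : K.index = p := by rw [hcompl.symm.index_eq_card, hPcard]
      rw [← Subgroup.index_eq_card]
      exact h2 ▸ h1
    have hcomm : ∀ a b : G, a * b = b * a :=
      commutative_of_cyclic_center_quotient (QuotientGroup.mk' (Subgroup.center G))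
        (by rw [QuotientGroup.ker_mk'])
    -- build an element of order n
    have hpm : Nat.Coprime p m := by
      refine (hp.coprime_iff_not_dvd).mpr fun hd => ?_
      exact (Nat.squarefree_iff_prime_squarefree.mp hsf) p hp
        (by rw [← hKP]; exact Nat.mul_dvd_mul_right hd p)
    obtain ⟨x, hx⟩ := hKcyc.exists_ofOrder_eq_natCard
    obtain ⟨y, hy⟩ := hPcyc.exists_ofOrder_eq_natCard
    rw [hPcard] at hy
    have hxG : orderOf (x : G) = m := by rw [Subgroup.orderOf_coe, hx]
    have hyG : orderOf ((y : G) : G) = p := by rw [Subgroup.orderOf_coe, hy]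
    have hcom : Commute (x : G) (y : G) := hcomm _ _
    have hord : orderOf ((x : G) * (y : G)) = n := by
      rw [hcom.orderOf_mul_eq_mul_orderOf_of_coprime (by rw [hxG, hyG]; exact hpm.symm),
        hxG, hyG, hKP]
    exact isCyclic_of_orderOf_eq_card _ (by rw [hord, hNcard])

/-- A positive integer `n` is a cyclic number (every group of order `n` is cyclic)
if and only if `gcd(n, φ(n)) = 1`. -/
theorem cyclic_number_iff_coprime_totient (n : ℕ) (hn : 0 < n) :
    (∀ (G : Type) [Group G] [Fintype G], Fintype.card G = n → IsCyclic G) ↔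
      Nat.Coprime n (Nat.totient n) := by
  constructor
  · intro hall
    by_contra hnc
    -- there is a prime p dividing both n and φ(n)
    set d := Nat.gcd n n.totient with hddef
    have hd1 : d ≠ 1 := hnc
    have hp : d.minFac.Prime := Nat.minFac_prime hd1
    set p := d.minFac with hpdef
    have hpn : p ∣ n := (Nat.minFac_dvd d).trans (Nat.gcd_dvd_left _ _)
    have hptot : p ∣ n.totient := (Nat.minFac_dvd d).trans (Nat.gcd_dvd_right _ _)
    by_cases hsq : p * p ∣ n
    · obtain ⟨G, _, _, hcd, hncyc⟩ := exists_noncyclic_sq hp (n / (p * p))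
        (Nat.div_pos (Nat.le_of_dvd hn hsq) (Nat.mul_pos hp.pos hp.pos))
      exact hncyc (hall G (by rw [hcd, Nat.mul_div_cancel' hsq]))
    · -- p does not divide n/p, and p ∣ φ(n/p)
      set m := n / p with hmdef
      have hnm : p * m = n := Nat.mul_div_cancel' hpn
      have hm0 : 0 < m := Nat.div_pos (Nat.le_of_dvd hn hpn) hp.pos
      have hpm : ¬ p ∣ m := fun hd => hsq (by rw [← hnm]; exact Nat.mul_dvd_mul_left p hd)
      have hcop : Nat.Coprime p m := (hp.coprime_iff_not_dvd).mpr hpm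
      have htot : n.totient = p.totient * m.totient := by
        rw [← hnm, Nat.totient_mul hcop]
      have hp2 := hp.two_le
      have hptotm : p ∣ m.totient := by
        rw [htot, Nat.totient_prime hp] at hptot
        rcases (Nat.Prime.dvd_mul hp).mp hptot with h1 | h2
        · have := Nat.le_of_dvd (by omega : 0 < p - 1) h1
          omega
        · exact h2
      obtain ⟨q, hq, hqm, hpq1⟩ := exists_prime_dvd_sub_one hp m hpm hptotm
      have hqn : q ∣ n := hqm.trans ⟨p, by rw [← hnm]; ring⟩
      have hpqn : p * q ∣ n := by
        rw [← hnm]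
        exact Nat.mul_dvd_mul_left p hqm
      obtain ⟨G, _, _, hcd, hncyc⟩ := exists_noncyclic_sd hp hq hpq1 (n / (p * q))
        (Nat.div_pos (Nat.le_of_dvd hn hpqn) (Nat.mul_pos hp.pos hq.pos))
      exact hncyc (hall G (by rw [hcd, Nat.mul_div_cancel' hpqn]))
  · intro h G _ _ hcard
    exact isCyclic_of_coprime_totient n h G hcard
end

section
/- (Vaaler's approximation) For any real H ≥ 1, there exist complex numbers a_h (0 < |h| ≤ H) and nonnegative reals b_h (|h| ≤ H) such that for all real t, |ψ(t) - ∑_{0 < |h| ≤ H} a_h e(ht)| ≤ ∑_{|h| ≤ H} b_h e(ht), with |a_h| ≪ 1/|h| and b_h ≪ 1/H, where ψ(t) = {t} - 1/2 and e(t) = e^{2πit}. -/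
open Finset

/-- `e(t) = e^{2πit}`. -/
noncomputable def eTwoPi (t : ℝ) : ℂ := Complex.exp (2 * Real.pi * Complex.I * t)

/-- The sawtooth function `ψ(t) = {t} - 1/2`. -/
noncomputable def sawtooth (t : ℝ) : ℝ := Int.fract t - 1 / 2

namespace Vaaler
open Complex Real

lemma eTwoPi_int_mul (h : ℤ) (x : ℝ) : eTwoPi (h * x) = eTwoPi x ^ h := by
  rw [eTwoPi, eTwoPi, ← Complex.exp_int_mul]; congr 1; push_cast; ring

lemma eTwoPi_abs (x : ℝ) : ‖eTwoPi x‖ = 1 := by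
  rw [eTwoPi, Complex.norm_exp]; norm_num [Complex.mul_re]

lemma eTwoPi_ne_zero (x : ℝ) : eTwoPi x ≠ 0 := Complex.exp_ne_zero _

lemma eTwoPi_eq_cos_sin (x : ℝ) :
    eTwoPi x = (Real.cos (2*π*x) : ℂ) + (Real.sin (2*π*x) : ℂ) * Complex.I := by
  rw [eTwoPi]
  rw [show (2 * (π:ℂ) * Complex.I * x) = ((2*π*x : ℝ) : ℂ) * Complex.I by push_cast; ring]
  rw [Complex.exp_mul_I, ← Complex.ofReal_cos, ← Complex.ofReal_sin]

lemma eTwoPi_int (k : ℤ) : eTwoPi (k : ℝ) = 1 := by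
  rw [eTwoPi]
  rw [show (2 * (π:ℂ) * Complex.I * ((k:ℝ):ℂ)) = (k:ℂ) * (2 * (π:ℂ) * Complex.I) by push_cast; ring]
  exact Complex.exp_int_mul_two_pi_mul_I k

lemma eTwoPi_add (x y : ℝ) : eTwoPi (x + y) = eTwoPi x * eTwoPi y := by
  rw [eTwoPi, eTwoPi, eTwoPi, ← Complex.exp_add]; congr 1; push_cast; ring

lemma eTwoPi_fract (t : ℝ) : eTwoPi t = eTwoPi (Int.fract t) := by
  conv_lhs => rw [show t = (⌊t⌋ : ℝ) + Int.fract t by rw [Int.fract]; ring]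
  rw [eTwoPi_add, eTwoPi_int, one_mul]

lemma eTwoPi_conj (x : ℝ) : (starRingEnd ℂ) (eTwoPi x) = eTwoPi (-x) := by
  rw [eTwoPi, eTwoPi, ← Complex.exp_conj]
  congr 1
  simp only [map_mul, Complex.conj_I, Complex.conj_ofReal, map_ofNat]
  push_cast
  ring




lemma sum_Icc_reflect {β : Type*} [AddCommMonoid β] (n : ℕ) (f : ℤ → β) :
    ∑ h ∈ Icc (-(n:ℤ)) n, f h = f 0 + ∑ h ∈ Icc (1:ℤ) n, (f h + f (-h)) := by
  induction n with
  | zero => simp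
  | succ n ih =>
    have h1 : Icc (-(↑(n+1):ℤ)) (↑(n+1)) = insert (-(↑(n+1):ℤ)) (insert ((↑(n+1):ℤ)) (Icc (-(n:ℤ)) n)) := by
      ext j; simp only [mem_Icc, mem_insert]; push_cast; omega
    have h2 : Icc (1:ℤ) (↑(n+1)) = insert ((↑(n+1):ℤ)) (Icc (1:ℤ) n) := by
      ext j; simp only [mem_Icc, mem_insert]; push_cast; omega
    have hn1 : (-(↑(n+1):ℤ)) ∉ insert ((↑(n+1):ℤ)) (Icc (-(n:ℤ)) n) := by
      simp only [mem_insert, mem_Icc]; push_cast; omega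
    have hn2 : ((↑(n+1):ℤ)) ∉ Icc (-(n:ℤ)) n := by simp only [mem_Icc]; push_cast; omega
    have hn3 : ((↑(n+1):ℤ)) ∉ Icc (1:ℤ) n := by simp only [mem_Icc]; push_cast; omega
    rw [h1, h2, sum_insert hn1, sum_insert hn2, sum_insert hn3, ih]
    push_cast
    abel

lemma sum_Icc_erase_reflect (n : ℕ) (f : ℤ → ℂ) :
    ∑ h ∈ (Icc (-(n:ℤ)) n).erase 0, f h = ∑ h ∈ Icc (1:ℤ) n, (f h + f (-h)) := by
  have h0 : (0:ℤ) ∈ Icc (-(n:ℤ)) n := by simp [mem_Icc]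
  have := Finset.add_sum_erase _ f h0
  have h2 := sum_Icc_reflect n f
  rw [← this] at h2
  exact add_left_cancel h2

lemma sum_Icc_neg {β : Type*} [AddCommMonoid β] (m : ℕ) (f : ℤ → β) :
    ∑ j ∈ Icc (-(m:ℤ)) m, f (-j) = ∑ j ∈ Icc (-(m:ℤ)) m, f j := by
  apply Finset.sum_nbij' (fun a => -a) (fun a => -a)
  · intro a ha; rw [mem_Icc] at *; omega
  · intro a ha; rw [mem_Icc] at *; omega
  · intro a _; ring
  · intro a _; ring
  · intro a _; norm_num

/-- The key convolution expansion lemma. -/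
lemma conv (w : ℤ → ℝ) (m n : ℕ) (hmn : 2*m ≤ n)
    (hs : ∀ j : ℤ, j ∉ Icc (-(m:ℤ)) m → w j = 0) (z : ℂ) (hz : z ≠ 0) :
    ∑ h ∈ Icc (-(n:ℤ)) n, ((∑ j ∈ Icc (-(m:ℤ)) m, w j * w (j - h) : ℝ) : ℂ) * z ^ h
      = (∑ j ∈ Icc (-(m:ℤ)) m, (w j : ℂ) * z ^ j) *
        ∑ j ∈ Icc (-(m:ℤ)) m, (w j : ℂ) * z ^ (-j) := by
  have key : ∀ j ∈ Icc (-(m:ℤ)) m,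
      ∑ h ∈ Icc (-(n:ℤ)) n, ((w j : ℂ) * (w (j - h) : ℂ)) * z ^ h
        = ((w j : ℂ) * z ^ j) * ∑ k ∈ Icc (-(m:ℤ)) m, (w k : ℂ) * z ^ (-k) := by
    intro j hj
    rw [mem_Icc] at hj
    have step1 : ∑ h ∈ Icc (-(n:ℤ)) n, ((w j : ℂ) * (w (j - h) : ℂ)) * z ^ h
        = ∑ k ∈ Icc (j - n) (j + n), ((w j : ℂ) * (w k : ℂ)) * z ^ (j - k) := by
      apply Finset.sum_nbij' (fun h => j - h) (fun k => j - k)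
      · intro a ha; rw [mem_Icc] at *; omega
      · intro a ha; rw [mem_Icc] at *; omega
      · intros; omega
      · intros; omega
      · intro a ha; congr 2; omega
    rw [step1]
    have step2 : ∑ k ∈ Icc (j - n) (j + n), ((w j : ℂ) * (w k : ℂ)) * z ^ (j - k)
        = ∑ k ∈ Icc (-(m:ℤ)) m, ((w j : ℂ) * (w k : ℂ)) * z ^ (j - k) := by
      symm
      apply Finset.sum_subset
      · intro k hk; rw [mem_Icc] at *; omega
      · intro k _ hk
        rw [hs k hk]
        norm_num
    rw [step2, Finset.mul_sum]
    apply Finset.sum_congr rfl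
    intro k _
    rw [zpow_sub₀ hz, zpow_neg]
    field_simp
  calc ∑ h ∈ Icc (-(n:ℤ)) n, ((∑ j ∈ Icc (-(m:ℤ)) m, w j * w (j - h) : ℝ) : ℂ) * z ^ h
      = ∑ h ∈ Icc (-(n:ℤ)) n, ∑ j ∈ Icc (-(m:ℤ)) m, ((w j :ℂ) * (w (j - h) :ℂ)) * z ^ h := by
        apply Finset.sum_congr rfl; intro h _
        push_cast
        rw [Finset.sum_mul]
    _ = ∑ j ∈ Icc (-(m:ℤ)) m, ∑ h ∈ Icc (-(n:ℤ)) n, ((w j :ℂ) * (w (j - h) :ℂ)) * z ^ h :=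
        Finset.sum_comm
    _ = ∑ j ∈ Icc (-(m:ℤ)) m, ((w j : ℂ) * z ^ j) * ∑ k ∈ Icc (-(m:ℤ)) m, (w k : ℂ) * z ^ (-k) :=
        Finset.sum_congr rfl key
    _ = _ := by rw [← Finset.sum_mul]

/-- Convolution expansion as a norm-square, when `|z| = 1`. -/
lemma conv_normSq (w : ℤ → ℝ) (m n : ℕ) (hmn : 2*m ≤ n)
    (hs : ∀ j : ℤ, j ∉ Icc (-(m:ℤ)) m → w j = 0) (z : ℂ) (hz : ‖z‖ = 1) :
    ∑ h ∈ Icc (-(n:ℤ)) n, ((∑ j ∈ Icc (-(m:ℤ)) m, w j * w (j - h) : ℝ) : ℂ) * z ^ h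
      = ((Complex.normSq (∑ j ∈ Icc (-(m:ℤ)) m, (w j : ℂ) * z ^ j) : ℝ) : ℂ) := by
  have hz0 : z ≠ 0 := by
    intro h; rw [h] at hz; simp at hz
  rw [conv w m n hmn hs z hz0]
  rw [← Complex.mul_conj]
  congr 1
  rw [map_sum]
  apply Finset.sum_congr rfl
  intro j _
  rw [map_mul, Complex.conj_ofReal, map_zpow₀]
  have hconj : (starRingEnd ℂ) z = z⁻¹ := by
    rw [Complex.inv_def, Complex.normSq_eq_norm_sq, hz]
    norm_num
  rw [hconj, inv_zpow, ← zpow_neg]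



noncomputable def chi (m : ℕ) (j : ℤ) : ℝ := if j ∈ Icc (-(m:ℤ)) m then 1 else 0

noncomputable def qc (m : ℕ) (h : ℤ) : ℝ := ∑ j ∈ Icc (-(m:ℤ)) m, chi m j * chi m (j - h)

noncomputable def cJ (M : ℕ) (h : ℤ) : ℝ :=
  ∑ j ∈ Icc (-(2*M:ℤ)) (2*M), qc M j * qc M (j - h)

lemma chi_nonneg (m : ℕ) (j : ℤ) : 0 ≤ chi m j := by unfold chi; positivity

lemma chi_le_one (m : ℕ) (j : ℤ) : chi m j ≤ 1 := by unfold chi; split <;> norm_num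

lemma chi_supp (m : ℕ) (j : ℤ) (hj : j ∉ Icc (-(m:ℤ)) m) : chi m j = 0 := by
  unfold chi; rw [if_neg hj]

lemma chi_eq_one (m : ℕ) (j : ℤ) (hj : j ∈ Icc (-(m:ℤ)) m) : chi m j = 1 := by
  unfold chi; rw [if_pos hj]

lemma chi_even (m : ℕ) (j : ℤ) : chi m (-j) = chi m j := by
  unfold chi
  congr 1
  simp only [mem_Icc, eq_iff_iff]
  omega

lemma qc_nonneg (m : ℕ) (h : ℤ) : 0 ≤ qc m h := by
  unfold qc
  apply Finset.sum_nonneg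
  intro j _
  exact mul_nonneg (chi_nonneg _ _) (chi_nonneg _ _)

lemma qc_le (m : ℕ) (h : ℤ) : qc m h ≤ 2*m+1 := by
  unfold qc
  calc ∑ j ∈ Icc (-(m:ℤ)) m, chi m j * chi m (j - h)
      ≤ ∑ j ∈ Icc (-(m:ℤ)) m, 1 := by
        apply Finset.sum_le_sum
        intro j _
        calc chi m j * chi m (j-h) ≤ 1 * 1 :=
          mul_le_mul (chi_le_one _ _) (chi_le_one _ _) (chi_nonneg _ _) zero_le_one
        _ = 1 := by norm_num
    _ = ((2*m+1 : ℕ) : ℝ) := by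
        rw [Finset.sum_const, Int.card_Icc]
        simp only [nsmul_eq_mul, mul_one]
        congr 1
        omega
    _ = 2*m+1 := by push_cast; ring

lemma qc_supp (m : ℕ) (h : ℤ) (hh : h ∉ Icc (-(2*m:ℤ)) (2*m)) : qc m h = 0 := by
  unfold qc
  apply Finset.sum_eq_zero
  intro j hj
  rw [mem_Icc] at hj hh
  push_cast at hh
  rcases le_or_gt (chi m (j - h)) 0 with hc | hc
  · have := chi_nonneg m (j - h)
    have : chi m (j - h) = 0 := le_antisymm hc this
    rw [this, mul_zero]
  · have : j - h ∈ Icc (-(m:ℤ)) m := by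
      by_contra hcon
      rw [chi_supp m _ hcon] at hc
      exact lt_irrefl _ hc
    rw [mem_Icc] at this
    omega

lemma qc_even (m : ℕ) (h : ℤ) : qc m (-h) = qc m h := by
  unfold qc
  apply Finset.sum_nbij' (fun a => -a) (fun a => -a)
  · intro a ha; rw [mem_Icc] at *; omega
  · intro a ha; rw [mem_Icc] at *; omega
  · intro a _; ring
  · intro a _; ring
  · intro a _
    rw [show a - -h = -(-a - h) by ring, chi_even, ← chi_even m a]

lemma qc_ge (m : ℕ) (h : ℤ) (h0 : 0 ≤ h) (h2 : h ≤ 2*m) : (2*(m:ℝ)+1) - h ≤ qc m h := by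
  unfold qc
  have hsub : Icc (h - m) (m:ℤ) ⊆ Icc (-(m:ℤ)) m := by
    intro j hj; rw [mem_Icc] at *; omega
  calc (2*(m:ℝ)+1) - h = ∑ j ∈ Icc (h - m) (m:ℤ), 1 := by
        rw [Finset.sum_const, Int.card_Icc, nsmul_eq_mul, mul_one]
        have hle : h.toNat ≤ 2*m+1 := by omega
        have : ((m:ℤ) + 1 - (h - m)).toNat = 2*m+1 - h.toNat := by omega
        rw [this, Nat.cast_sub hle]
        push_cast [Int.toNat_of_nonneg h0]
        have hc : ((h.toNat:ℕ):ℝ) = (h:ℝ) := by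
          rw [← Int.cast_natCast, Int.toNat_of_nonneg h0]
        rw [hc]
    _ = ∑ j ∈ Icc (h - m) (m:ℤ), chi m j * chi m (j - h) := by
        apply Finset.sum_congr rfl
        intro j hj
        rw [mem_Icc] at hj
        rw [chi_eq_one m j (by rw [mem_Icc]; omega), chi_eq_one m (j-h) (by rw [mem_Icc]; omega)]
        norm_num
    _ ≤ _ := by
        apply Finset.sum_le_sum_of_subset_of_nonneg hsub
        intro j _ _
        exact mul_nonneg (chi_nonneg _ _) (chi_nonneg _ _)

lemma cJ_nonneg (M : ℕ) (h : ℤ) : 0 ≤ cJ M h := by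
  unfold cJ
  apply Finset.sum_nonneg
  intro j _
  exact mul_nonneg (qc_nonneg _ _) (qc_nonneg _ _)

lemma cJ_even (M : ℕ) (h : ℤ) : cJ M (-h) = cJ M h := by
  unfold cJ
  apply Finset.sum_nbij' (fun a => -a) (fun a => -a)
  · intro a ha; rw [mem_Icc] at *; omega
  · intro a ha; rw [mem_Icc] at *; omega
  · intro a _; ring
  · intro a _; ring
  · intro a _
    rw [show a - -h = -(-a - h) by ring, qc_even, ← qc_even M a]


lemma qc_sq_shift_le (M : ℕ) (h : ℤ) :
    ∑ j ∈ Icc (-(2*M:ℤ)) (2*M), qc M (j - h) ^ 2 ≤ cJ M 0 := by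
  have step1 : ∑ j ∈ Icc (-(2*M:ℤ)) (2*M), qc M (j - h) ^ 2
      = ∑ j ∈ Icc (-(2*M:ℤ) - h) ((2*M:ℤ) - h), qc M j ^ 2 := by
    apply Finset.sum_nbij' (fun a => a - h) (fun a => a + h)
    · intro a ha; rw [mem_Icc] at *; omega
    · intro a ha; rw [mem_Icc] at *; omega
    · intro a _; ring
    · intro a _; ring
    · intro a _; rfl
  rw [step1]
  have step2 : ∑ j ∈ Icc (-(2*M:ℤ) - h) ((2*M:ℤ) - h), qc M j ^ 2
      ≤ ∑ j ∈ Icc (-(2*M:ℤ) - |h|) ((2*M:ℤ) + |h|), qc M j ^ 2 := by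
    apply Finset.sum_le_sum_of_subset_of_nonneg
    · intro j hj; rw [mem_Icc] at *
      rcases abs_cases h with ⟨he, _⟩ | ⟨he, _⟩ <;> omega
    · intro j _ _; positivity
  have step3 : ∑ j ∈ Icc (-(2*M:ℤ) - |h|) ((2*M:ℤ) + |h|), qc M j ^ 2
      = ∑ j ∈ Icc (-(2*M:ℤ)) (2*M), qc M j ^ 2 := by
    symm
    apply Finset.sum_subset
    · intro j hj; rw [mem_Icc] at *
      have := abs_nonneg h; omega
    · intro j _ hj
      have : j ∉ Icc (-(2*M:ℤ)) (2*M) := hj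
      rw [qc_supp M j this]
      norm_num
  have step4 : ∑ j ∈ Icc (-(2*M:ℤ)) (2*M), qc M j ^ 2 = cJ M 0 := by
    unfold cJ
    apply Finset.sum_congr rfl
    intro j _
    rw [sub_zero]
    ring
  linarith

lemma cJ_le_S (M : ℕ) (h : ℤ) : cJ M h ≤ cJ M 0 := by
  have hsum : ∑ j ∈ Icc (-(2*M:ℤ)) (2*M), 2*(qc M j * qc M (j - h))
      ≤ ∑ j ∈ Icc (-(2*M:ℤ)) (2*M), (qc M j ^ 2 + qc M (j - h) ^ 2) := by
    apply Finset.sum_le_sum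
    intro j _
    nlinarith [sq_nonneg (qc M j - qc M (j - h))]
  rw [Finset.sum_add_distrib, ← Finset.mul_sum] at hsum
  have h1 : ∑ j ∈ Icc (-(2*M:ℤ)) (2*M), qc M j ^ 2 = cJ M 0 := by
    unfold cJ
    apply Finset.sum_congr rfl
    intro j _
    rw [sub_zero]; ring
  have h2 := qc_sq_shift_le M h
  have h3 : cJ M h = ∑ j ∈ Icc (-(2*M:ℤ)) (2*M), qc M j * qc M (j - h) := rfl
  rw [h3]
  linarith

lemma sum_sq_lb (K : ℕ) : ((K:ℝ)+1)^3/3 ≤ ∑ k ∈ range (K+1), ((k:ℝ)+1)^2 := by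
  induction K with
  | zero => norm_num
  | succ K ih =>
    rw [Finset.sum_range_succ]
    push_cast
    push_cast at ih
    have hK : (0:ℝ) ≤ (K:ℝ) := Nat.cast_nonneg K
    nlinarith [ih, hK]

lemma S_lb (M : ℕ) : (2*(M:ℝ)+1)^3/3 ≤ cJ M 0 := by
  have step1 : ∑ k ∈ range (2*M+1), ((k:ℝ)+1)^2 ≤ cJ M 0 := by
    have reindex : ∑ k ∈ range (2*M+1), ((k:ℝ)+1)^2
        = ∑ j ∈ Icc (0:ℤ) (2*M), ((2*(M:ℝ)+1) - (j:ℝ))^2 := by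
      apply Finset.sum_nbij' (fun k => ((2*M - k : ℕ) : ℤ)) (fun j => (2*M - j).toNat)
      · intro a ha; rw [Finset.mem_range] at ha; rw [mem_Icc]; omega
      · intro a ha; rw [mem_Icc] at ha; rw [Finset.mem_range]; omega
      · intro a ha; rw [Finset.mem_range] at ha; omega
      · intro a ha; rw [mem_Icc] at ha; omega
      · intro a ha; rw [Finset.mem_range] at ha
        have h1 : ((2*M - a : ℕ) : ℝ) = 2*(M:ℝ) - a := by
          have : a ≤ 2*M := by omega
          push_cast [Nat.cast_sub this]
          ring
        rw [show (((2*M - a : ℕ) : ℤ) : ℝ) = ((2*M - a : ℕ) : ℝ) by push_cast; ring, h1]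
        ring
    rw [reindex]
    calc ∑ j ∈ Icc (0:ℤ) (2*M), ((2*(M:ℝ)+1) - (j:ℝ))^2
        ≤ ∑ j ∈ Icc (0:ℤ) (2*M), qc M j ^ 2 := by
          apply Finset.sum_le_sum
          intro j hj
          rw [mem_Icc] at hj
          have h1 := qc_ge M j hj.1 hj.2
          have h2 : (0:ℝ) ≤ (2*(M:ℝ)+1) - (j:ℝ) := by
            have : (j:ℝ) ≤ 2*M := by exact_mod_cast hj.2
            linarith
          nlinarith
      _ ≤ ∑ j ∈ Icc (-(2*M:ℤ)) (2*M), qc M j ^ 2 := by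
          apply Finset.sum_le_sum_of_subset_of_nonneg
          · intro j hj; rw [mem_Icc] at *; omega
          · intro j _ _; positivity
      _ = cJ M 0 := by
          unfold cJ
          apply Finset.sum_congr rfl
          intro j _
          rw [sub_zero]; ring
  have step2 := sum_sq_lb (2*M)
  have hcast : ((2*M:ℕ):ℝ) = 2*(M:ℝ) := by push_cast; ring
  rw [hcast] at step2
  linarith

noncomputable def DS (m : ℕ) (z : ℂ) : ℂ := ∑ j ∈ Icc (-(m:ℤ)) m, z ^ j

lemma abs_exp_mul_I_sub_one (θ : ℝ) :
    ‖Complex.exp ((θ:ℂ) * Complex.I) - 1‖ = 2*|Real.sin (θ/2)| := by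
  have key : Complex.exp ((θ:ℂ) * Complex.I) - 1
      = Complex.exp (((θ/2 : ℝ):ℂ) * Complex.I) *
        (Complex.exp (((θ/2 : ℝ):ℂ) * Complex.I) - Complex.exp (-(((θ/2 : ℝ):ℂ) * Complex.I))) := by
    have e1 : ((θ/2 : ℝ):ℂ) * Complex.I + ((θ/2 : ℝ):ℂ) * Complex.I = (θ:ℂ)*Complex.I := by
      push_cast; ring
    have e2 : ((θ/2 : ℝ):ℂ) * Complex.I + (-(((θ/2 : ℝ):ℂ) * Complex.I)) = 0 := by ring
    rw [mul_sub, ← Complex.exp_add, ← Complex.exp_add, e1, e2, Complex.exp_zero]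
  rw [key, norm_mul, Complex.norm_exp]
  have hre : (((θ/2 : ℝ):ℂ) * Complex.I).re = 0 := by simp
  rw [hre, Real.exp_zero, one_mul]
  have expand : Complex.exp (((θ/2 : ℝ):ℂ) * Complex.I) - Complex.exp (-(((θ/2 : ℝ):ℂ) * Complex.I))
      = 2 * (Real.sin (θ/2) : ℂ) * Complex.I := by
    rw [show (-(((θ/2 : ℝ):ℂ) * Complex.I)) = ((-(θ/2) : ℝ):ℂ) * Complex.I by push_cast; ring]
    rw [Complex.exp_mul_I, Complex.exp_mul_I]
    rw [← Complex.ofReal_cos, ← Complex.ofReal_sin, ← Complex.ofReal_cos, ← Complex.ofReal_sin]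
    rw [Real.cos_neg, Real.sin_neg]
    push_cast
    ring
  rw [expand]
  rw [norm_mul, norm_mul, Complex.norm_I, Complex.norm_real, Real.norm_eq_abs]
  rw [show ‖(2:ℂ)‖ = 2 by norm_num]
  ring

lemma abs_eTwoPi_pow_sub_one (K : ℕ) (x : ℝ) :
    ‖eTwoPi x ^ (K:ℤ) - 1‖ = 2*|Real.sin ((K:ℝ)*π*x)| := by
  rw [← eTwoPi_int_mul]
  rw [show eTwoPi ((K:ℤ) * x) = Complex.exp (((2*π*(K:ℝ)*x : ℝ):ℂ) * Complex.I) by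
    rw [eTwoPi]; congr 1; push_cast; ring]
  rw [abs_exp_mul_I_sub_one]
  congr 2
  ring

lemma eTwoPi_ne_one (x : ℝ) (h0 : 0 < x) (h1 : x < 1) : eTwoPi x ≠ 1 := by
  rw [eTwoPi]
  intro hcon
  rw [Complex.exp_eq_one_iff] at hcon
  obtain ⟨k, hk⟩ := hcon
  have : (x : ℂ) = (k : ℂ) := by
    have h2 : (2 * (π:ℂ) * Complex.I) ≠ 0 := by
      simp [Complex.I_ne_zero, Real.pi_ne_zero]
    apply mul_left_cancel₀ h2
    rw [show 2 * (π:ℂ) * Complex.I * x = 2 * ↑π * Complex.I * ↑x by ring, hk]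
    ring
  have : x = (k : ℝ) := by exact_mod_cast this
  rw [this] at h0 h1
  have : (0:ℤ) < k := by exact_mod_cast h0
  have : k < 1 := by exact_mod_cast h1
  omega

lemma DS_one (m : ℕ) : DS m 1 = ((2*(m:ℝ)+1 : ℝ) : ℂ) := by
  unfold DS
  rw [Finset.sum_congr rfl (fun j _ => one_zpow j), Finset.sum_const, Int.card_Icc]
  have : ((m:ℤ) + 1 - -(m:ℤ)).toNat = 2*m+1 := by omega
  rw [this]
  push_cast
  ring

lemma abs_DS (m : ℕ) (x : ℝ) (hne : eTwoPi x ≠ 1) :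
    ‖DS m (eTwoPi x)‖ = |Real.sin ((2*(m:ℝ)+1)*π*x)| / |Real.sin (π*x)| := by
  set z := eTwoPi x with hz
  have hz0 : z ≠ 0 := eTwoPi_ne_zero x
  have key : DS m z * z ^ (m:ℤ) * (z - 1) = z ^ ((2*m+1 : ℕ):ℤ) - 1 := by
    have expand : DS m z * z ^ (m:ℤ) = ∑ j ∈ range (2*m+1), z ^ j := by
      unfold DS
      rw [Finset.sum_mul]
      apply Finset.sum_nbij' (fun j : ℤ => (j + m).toNat) (fun k : ℕ => (k:ℤ) - m)
      · intro a ha; rw [mem_Icc] at ha; rw [Finset.mem_range]; omega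
      · intro a ha; rw [Finset.mem_range] at ha; rw [mem_Icc]; omega
      · intro a ha; rw [mem_Icc] at ha; omega
      · intro a ha; rw [Finset.mem_range] at ha; omega
      · intro a ha
        rw [mem_Icc] at ha
        rw [← zpow_add₀ hz0, ← zpow_natCast]
        congr 1
        omega
    rw [expand, geom_sum_mul, zpow_natCast]
  have habs := congrArg (‖·‖) key
  rw [norm_mul, norm_mul, norm_zpow, eTwoPi_abs, one_zpow, mul_one] at habs
  rw [abs_eTwoPi_pow_sub_one] at habs
  have h1 : ‖z - 1‖ = 2*|Real.sin (π*x)| := by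
    have h := abs_eTwoPi_pow_sub_one 1 x
    norm_num at h
    rw [← hz] at h
    rw [h]
  rw [h1] at habs
  have hsin : Real.sin (π*x) ≠ 0 := by
    intro hcon
    rw [Real.sin_eq_zero_iff] at hcon
    obtain ⟨k, hk⟩ := hcon
    have hpx : π * x = π * (k:ℝ) := by linarith [hk]
    have hx : x = (k:ℝ) := mul_left_cancel₀ Real.pi_ne_zero hpx
    apply hne
    rw [hz, hx]
    exact eTwoPi_int k
  have h2 : |Real.sin (π*x)| ≠ 0 := abs_ne_zero.mpr hsin
  rw [eq_div_iff h2]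
  push_cast at habs
  linarith

lemma sin_pix_bounds (x : ℝ) (h0 : 0 < x) (hhalf : x ≤ 1/2) :
    2*x ≤ Real.sin (π*x) ∧ Real.sin (π*x) ≤ π*x ∧ 0 < Real.sin (π*x) := by
  have hpi := Real.pi_pos
  have h1 : 0 ≤ π * x := by positivity
  have h2 : π * x ≤ π / 2 := by nlinarith
  have hj := Real.mul_le_sin h1 h2
  have hle := Real.sin_le h1
  have hpos : 0 < Real.sin (π*x) := Real.sin_pos_of_pos_of_lt_pi (by positivity) (by nlinarith)
  refine ⟨?_, hle, hpos⟩
  have : 2 / π * (π * x) = 2 * x := by field_simp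
  linarith [this ▸ hj]

lemma normSq_DS_eq (m : ℕ) (x : ℝ) (hne : eTwoPi x ≠ 1) :
    Complex.normSq (DS m (eTwoPi x))
      = (Real.sin ((2*(m:ℝ)+1)*π*x))^2 / (Real.sin (π*x))^2 := by
  rw [← Complex.sq_norm, abs_DS m x hne, div_pow, _root_.sq_abs, _root_.sq_abs]

lemma DS_upper (m : ℕ) (x : ℝ) (h0 : 0 < x) (hhalf : x ≤ 1/2) :
    Complex.normSq (DS m (eTwoPi x)) ≤ 1/(4*x^2) := by
  obtain ⟨hs1, hs2, hs3⟩ := sin_pix_bounds x h0 hhalf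
  have hne : eTwoPi x ≠ 1 := eTwoPi_ne_one x h0 (by linarith)
  rw [normSq_DS_eq m x hne]
  have hb : (Real.sin ((2*(m:ℝ)+1)*π*x))^2 ≤ 1 := by
    have := Real.neg_one_le_sin ((2*(m:ℝ)+1)*π*x)
    have := Real.sin_le_one ((2*(m:ℝ)+1)*π*x)
    nlinarith
  have hd : (2*x)^2 ≤ (Real.sin (π*x))^2 := by nlinarith
  have h4 : (0:ℝ) < 4*x^2 := by positivity
  have h5 : (0:ℝ) < (Real.sin (π*x))^2 := by positivity
  rw [div_le_div_iff₀ h5 h4]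
  nlinarith

lemma DS_lower_A (m : ℕ) (x : ℝ) (h0 : 0 ≤ x) (hx : (2*(m:ℝ)+1) * x ≤ 1/2) :
    (4/π^2) * (2*(m:ℝ)+1)^2 ≤ Complex.normSq (DS m (eTwoPi x)) := by
  have hpi := Real.pi_pos
  have hpi2 : (0:ℝ) < π^2 := by positivity
  rcases eq_or_lt_of_le h0 with h | h
  · rw [← h, show eTwoPi 0 = 1 by rw [show (0:ℝ) = ((0:ℤ):ℝ) by norm_num]; exact eTwoPi_int 0]
    rw [DS_one, Complex.normSq_ofReal]
    have hpisq : 4 ≤ π^2 := by nlinarith [Real.pi_gt_three]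
    have hv : (1:ℝ) ≤ 2*(m:ℝ)+1 := by have := Nat.cast_nonneg (α:=ℝ) m; linarith
    rw [div_mul_eq_mul_div, div_le_iff₀ hpi2]
    nlinarith
  · have hhalf : x ≤ 1/2 := by nlinarith [show (1:ℝ) ≤ 2*(m:ℝ)+1 by have := Nat.cast_nonneg (α:=ℝ) m; linarith]
    obtain ⟨hs1, hs2, hs3⟩ := sin_pix_bounds x h hhalf
    have hne : eTwoPi x ≠ 1 := eTwoPi_ne_one x h (by linarith)
    rw [normSq_DS_eq m x hne]
    set v : ℝ := 2*(m:ℝ)+1 with hv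
    have hv1 : (1:ℝ) ≤ v := by have := Nat.cast_nonneg (α:=ℝ) m; rw [hv]; linarith
    have hva : 0 ≤ v*π*x := by positivity
    have hvb : v*π*x ≤ π/2 := by
      rw [show v*π*x = π*(v*x) by ring]
      nlinarith
    have hj := Real.mul_le_sin hva hvb
    have hnum : 2*v*x ≤ Real.sin (v*π*x) := by
      have : 2/π*(v*π*x) = 2*v*x := by field_simp
      linarith [this ▸ hj]
    have hnum0 : 0 ≤ 2*v*x := by positivity
    have hden : Real.sin (π*x) ≤ π*x := hs2
    have hs3' : 0 < (Real.sin (π*x))^2 := by positivity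
    rw [le_div_iff₀ hs3']
    have hπx : 0 < π*x := by positivity
    calc 4/π^2 * v^2 * (Real.sin (π*x))^2 ≤ 4/π^2 * v^2 * (π*x)^2 := by
          apply mul_le_mul_of_nonneg_left (by nlinarith) (by positivity)
      _ = (2*v*x)^2 := by field_simp; ring
      _ ≤ (Real.sin (v*π*x))^2 := by nlinarith
  
lemma DS_lower_B (m : ℕ) (x : ℝ) (h0 : 0 < x) (hhalf : x ≤ 1/2)
    (h16 : 1/6 < (2*(m:ℝ)+1) * x) (hle : (2*(m:ℝ)+1) * x ≤ 1/2) :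
    1/(9*π^2*x^2) ≤ Complex.normSq (DS m (eTwoPi x)) := by
  have hpi := Real.pi_pos
  obtain ⟨hs1, hs2, hs3⟩ := sin_pix_bounds x h0 hhalf
  have hne : eTwoPi x ≠ 1 := eTwoPi_ne_one x h0 (by linarith)
  rw [normSq_DS_eq m x hne]
  set v : ℝ := 2*(m:ℝ)+1 with hv
  have hva : 0 ≤ v*π*x := by positivity
  have hvb : v*π*x ≤ π/2 := by
    rw [show v*π*x = π*(v*x) by ring]
    nlinarith
  have hj := Real.mul_le_sin hva hvb
  have hnum : 2*v*x ≤ Real.sin (v*π*x) := by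
    have : 2/π*(v*π*x) = 2*v*x := by field_simp
    linarith [this ▸ hj]
  have hnum13 : 1/3 < Real.sin (v*π*x) := by nlinarith
  have hs3' : 0 < (Real.sin (π*x))^2 := by positivity
  have h9 : (0:ℝ) < 9*π^2*x^2 := by positivity
  rw [div_le_div_iff₀ h9 hs3']
  have e1 : Real.sin (π*x)^2 ≤ π^2*x^2 := by nlinarith [hs2, hs3]
  have e2 : (1:ℝ)/9 ≤ Real.sin (v*π*x)^2 := by nlinarith [hnum13]
  have e3 : 9*π^2*x^2 * (1/9) ≤ 9*π^2*x^2 * Real.sin (v*π*x)^2 :=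
    mul_le_mul_of_nonneg_left e2 (le_of_lt h9)
  nlinarith [e1, e3]

lemma zpow_add_conj (h : ℤ) (x : ℝ) :
    (eTwoPi x)^h + (eTwoPi x)^(-h) = ((2*Real.cos (2*π*h*x) : ℝ) : ℂ) := by
  rw [← eTwoPi_int_mul, ← eTwoPi_int_mul]
  rw [eTwoPi_eq_cos_sin, eTwoPi_eq_cos_sin]
  rw [show 2*π*(((-h:ℤ):ℝ)*x) = -(2*π*(((h:ℤ):ℝ)*x)) by push_cast; ring]
  rw [Real.cos_neg, Real.sin_neg]
  rw [show 2*π*((h:ℝ)*x) = 2*π*(h:ℝ)*x by ring]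
  push_cast
  ring

lemma zpow_sub_conj (h : ℤ) (x : ℝ) :
    (eTwoPi x)^h - (eTwoPi x)^(-h) = Complex.I * ((2*Real.sin (2*π*h*x) : ℝ) : ℂ) := by
  rw [← eTwoPi_int_mul, ← eTwoPi_int_mul]
  rw [eTwoPi_eq_cos_sin, eTwoPi_eq_cos_sin]
  rw [show 2*π*(((-h:ℤ):ℝ)*x) = -(2*π*(((h:ℤ):ℝ)*x)) by push_cast; ring]
  rw [Real.cos_neg, Real.sin_neg]
  rw [show 2*π*((h:ℝ)*x) = 2*π*(h:ℝ)*x by ring]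
  push_cast
  ring

/-- scales for the majorant -/
def ml (l : ℕ) : ℕ := if l = 0 then 0 else 2^(l-1)

noncomputable def acoef (n : ℕ) (h : ℤ) : ℂ :=
  ((cJ (n/4) h / (cJ (n/4) 0 * (2*π*h))) : ℝ) * Complex.I

noncomputable def bcoef (n : ℕ) (h : ℤ) : ℝ :=
  (800/((n:ℝ)+1)^2) * ∑ l ∈ range (Nat.log 2 n + 1), qc (ml l) h

noncomputable def Gf (n : ℕ) (x : ℝ) : ℝ :=
  x - 1/2 + ∑ h ∈ Icc (1:ℤ) (n:ℤ), (cJ (n/4) h / cJ (n/4) 0) * (Real.sin (2*π*h*x) / (π*h))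

noncomputable def JR (n : ℕ) (x : ℝ) : ℝ :=
  1 + ∑ h ∈ Icc (1:ℤ) (n:ℤ), (cJ (n/4) h / cJ (n/4) 0) * (2 * Real.cos (2*π*h*x))

lemma S_pos (M : ℕ) : 0 < cJ M 0 := by
  have := S_lb M
  have h2 : (0:ℝ) < (2*(M:ℝ)+1)^3/3 := by positivity
  linarith

/-- The coefficients of the Dirichlet-kernel square. -/
lemma qc_sum_eq (M n : ℕ) (h2M : 2*M ≤ n) (z : ℂ) (hz : ‖z‖ = 1) :
    ∑ h ∈ Icc (-(n:ℤ)) n, ((qc M h : ℝ) : ℂ) * z ^ h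
      = ((Complex.normSq (DS M z) : ℝ) : ℂ) := by
  have hs : ∀ j : ℤ, j ∉ Icc (-(M:ℤ)) M → chi M j = 0 := fun j hj => chi_supp M j hj
  have conv1 := conv_normSq (chi M) M n h2M hs z hz
  have e1 : ∀ h : ℤ, qc M h = ∑ j ∈ Icc (-(M:ℤ)) M, chi M j * chi M (j - h) := fun h => rfl
  have e2 : (∑ j ∈ Icc (-(M:ℤ)) M, ((chi M j : ℝ):ℂ) * z ^ j) = DS M z := by
    unfold DS
    apply Finset.sum_congr rfl
    intro j hj
    rw [chi_eq_one M j hj]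
    norm_num
  rw [← e2]
  exact conv1

/-- The coefficients of its square, i.e. of the quartic kernel. -/
lemma cJ_sum_eq (M n : ℕ) (h4M : 4*M ≤ n) (z : ℂ) (hz : ‖z‖ = 1) :
    ∑ h ∈ Icc (-(n:ℤ)) n, ((cJ M h : ℝ) : ℂ) * z ^ h
      = (((Complex.normSq (DS M z))^2 : ℝ) : ℂ) := by
  have hs : ∀ j : ℤ, j ∉ Icc (-((2*M:ℕ):ℤ)) ((2*M:ℕ):ℤ) → qc M j = 0 := by
    intro j hj
    apply qc_supp
    rw [mem_Icc] at *
    push_cast at hj ⊢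
    omega
  have conv1 := conv_normSq (qc M) (2*M) n (by omega) hs z hz
  have e1 : ∀ h : ℤ, (∑ j ∈ Icc (-((2*M:ℕ):ℤ)) ((2*M:ℕ):ℤ), qc M j * qc M (j - h)) = cJ M h := by
    intro h
    unfold cJ
    apply Finset.sum_congr _ (fun j _ => rfl)
    congr 1 <;> first | rfl | (push_cast; ring)
  have e2 : (∑ j ∈ Icc (-((2*M:ℕ):ℤ)) ((2*M:ℕ):ℤ), ((qc M j : ℝ):ℂ) * z ^ j)
      = ((Complex.normSq (DS M z) : ℝ) : ℂ) := by
    have := qc_sum_eq M (2*M) (le_refl _) z hz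
    rw [← this]
    try (apply Finset.sum_congr _ (fun j _ => rfl); congr 1 <;> first | rfl | (push_cast; ring))
  calc ∑ h ∈ Icc (-(n:ℤ)) n, ((cJ M h : ℝ) : ℂ) * z ^ h
      = ∑ h ∈ Icc (-(n:ℤ)) n, ((∑ j ∈ Icc (-((2*M:ℕ):ℤ)) ((2*M:ℕ):ℤ), qc M j * qc M (j - h) : ℝ) : ℂ) * z ^ h := by
        apply Finset.sum_congr rfl
        intro h _
        rw [e1]
    _ = ((Complex.normSq (∑ j ∈ Icc (-((2*M:ℕ):ℤ)) ((2*M:ℕ):ℤ), ((qc M j : ℝ):ℂ) * z ^ j) : ℝ) : ℂ) := conv1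
    _ = _ := by
        rw [e2, Complex.normSq_ofReal]
        push_cast
        ring

/-- `JR` is the quartic kernel divided by `S`. -/
lemma JR_eq (n : ℕ) (x : ℝ) (hn : 1 ≤ n) :
    JR n x = (Complex.normSq (DS (n/4) (eTwoPi x)))^2 / cJ (n/4) 0 := by
  set M := n/4 with hM
  have h4M : 4*M ≤ n := by omega
  have hz : ‖eTwoPi x‖ = 1 := eTwoPi_abs x
  have key := cJ_sum_eq M n h4M (eTwoPi x) hz
  rw [sum_Icc_reflect n (fun h => ((cJ M h : ℝ) : ℂ) * (eTwoPi x) ^ h)] at key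
  have pair : ∀ h : ℤ, ((cJ M h : ℝ) : ℂ) * (eTwoPi x) ^ h + ((cJ M (-h) : ℝ) : ℂ) * (eTwoPi x) ^ (-h)
      = (((cJ M h) * (2*Real.cos (2*π*h*x)) : ℝ) : ℂ) := by
    intro h
    rw [cJ_even, ← mul_add, zpow_add_conj]
    push_cast
    ring
  rw [Finset.sum_congr rfl (fun h _ => pair h)] at key
  rw [zpow_zero, mul_one] at key
  rw [← Complex.ofReal_sum, ← Complex.ofReal_add] at key
  have keyR : cJ M 0 + ∑ h ∈ Icc (1:ℤ) n, cJ M h * (2*Real.cos (2*π*h*x))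
      = (Complex.normSq (DS M (eTwoPi x)))^2 := by exact_mod_cast key
  have hS := S_pos M
  unfold JR
  rw [← hM, eq_div_iff (ne_of_gt hS), add_mul, Finset.sum_mul, one_mul, ← keyR]
  congr 1
  apply Finset.sum_congr rfl
  intro h _
  field_simp

lemma hasDerivAt_Gf (n : ℕ) (x : ℝ) : HasDerivAt (Gf n) (JR n x) x := by
  unfold Gf JR
  apply HasDerivAt.add
  · simpa using (hasDerivAt_id x).sub_const (1/2 : ℝ)
  · apply HasDerivAt.fun_sum
    intro h hh
    rw [mem_Icc] at hh
    have hh1 : (1:ℤ) ≤ h := hh.1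
    have hhne : (h:ℝ) ≠ 0 := by
      have : (0:ℝ) < (h:ℝ) := by exact_mod_cast hh1
      linarith
    have hπ : (π:ℝ) ≠ 0 := Real.pi_ne_zero
    have hsin : HasDerivAt (fun y : ℝ => Real.sin (2*π*h*y)) (Real.cos (2*π*h*x) * (2*π*h)) x := by
      have hlin : HasDerivAt (fun y : ℝ => 2*π*(h:ℝ)*y) (2*π*(h:ℝ)) x := by
        simpa using (hasDerivAt_id x).const_mul (2*π*(h:ℝ))
      exact (Real.hasDerivAt_sin (2*π*h*x)).comp x hlin
    have this2 := (hsin.div_const (π*h)).const_mul (cJ (n/4) h / cJ (n/4) 0)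
    have heq : (cJ (n/4) h / cJ (n/4) 0) * (Real.cos (2*π*(h:ℝ)*x) * (2*π*(h:ℝ)) / (π*(h:ℝ)))
        = (cJ (n/4) h / cJ (n/4) 0) * (2*Real.cos (2*π*(h:ℝ)*x)) := by
      congr 1
      field_simp
    exact heq ▸ this2

lemma Gf_half (n : ℕ) : Gf n (1/2) = 0 := by
  unfold Gf
  have : ∀ h ∈ Icc (1:ℤ) (n:ℤ), (cJ (n/4) h / cJ (n/4) 0) * (Real.sin (2*π*h*(1/2)) / (π*h)) = 0 := by
    intro h _
    have : Real.sin (2*π*h*(1/2)) = 0 := by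
      rw [show 2*π*(h:ℝ)*(1/2) = (h:ℝ)*π by ring]
      exact_mod_cast Real.sin_int_mul_pi h
    rw [this]
    norm_num
  rw [Finset.sum_congr rfl this]
  norm_num

lemma Gf_zero (n : ℕ) : Gf n 0 = -(1/2) := by
  unfold Gf
  have : ∀ h ∈ Icc (1:ℤ) (n:ℤ), (cJ (n/4) h / cJ (n/4) 0) * (Real.sin (2*π*h*0) / (π*h)) = 0 := by
    intro h _
    norm_num
  rw [Finset.sum_congr rfl this]
  norm_num

lemma Gf_one (n : ℕ) : Gf n 1 = 1/2 := by
  unfold Gf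
  have : ∀ h ∈ Icc (1:ℤ) (n:ℤ), (cJ (n/4) h / cJ (n/4) 0) * (Real.sin (2*π*h*1) / (π*h)) = 0 := by
    intro h _
    have : Real.sin (2*π*h*1) = 0 := by
      rw [show 2*π*(h:ℝ)*1 = ((2*h:ℤ):ℝ)*π by push_cast; ring]
      exact Real.sin_int_mul_pi (2*h)
    rw [this]
    norm_num
  rw [Finset.sum_congr rfl this]
  norm_num

lemma Gf_symm (n : ℕ) (x : ℝ) : Gf n (1 - x) = -(Gf n x) := by
  unfold Gf
  have key : ∀ h ∈ Icc (1:ℤ) (n:ℤ),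
      (cJ (n/4) h / cJ (n/4) 0) * (Real.sin (2*π*h*(1-x)) / (π*h))
        = -((cJ (n/4) h / cJ (n/4) 0) * (Real.sin (2*π*h*x) / (π*h))) := by
    intro h _
    have : Real.sin (2*π*h*(1-x)) = -(Real.sin (2*π*h*x)) := by
      rw [show 2*π*(h:ℝ)*(1-x) = (h:ℝ)*(2*π) - 2*π*(h:ℝ)*x by ring]
      rw [Real.sin_sub]
      have h1 : Real.sin ((h:ℝ)*(2*π)) = 0 := by
        rw [show (h:ℝ)*(2*π) = ((2*h:ℤ):ℝ)*π by push_cast; ring]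
        exact Real.sin_int_mul_pi (2*h)
      have h2 : Real.cos ((h:ℝ)*(2*π)) = 1 := Real.cos_int_mul_two_pi h
      rw [h1, h2]
      ring
    rw [this]
    ring
  rw [Finset.sum_congr rfl key, Finset.sum_neg_distrib]
  ring

lemma Gf_mono (n : ℕ) (hn : 1 ≤ n) : Monotone (Gf n) := by
  have hdiff : Differentiable ℝ (Gf n) := fun x => (hasDerivAt_Gf n x).differentiableAt
  apply monotone_of_deriv_nonneg hdiff
  intro x
  rw [(hasDerivAt_Gf n x).deriv, JR_eq n x hn]
  have := S_pos (n/4)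
  positivity

lemma Gf_le_half (n : ℕ) (hn : 1 ≤ n) (x : ℝ) (h0 : 0 ≤ x) (h1 : x ≤ 1) : |Gf n x| ≤ 1/2 := by
  have hm := Gf_mono n hn
  have l1 := hm h0
  have l2 := hm h1
  rw [Gf_zero] at l1
  rw [Gf_one] at l2
  rw [abs_le]
  constructor <;> linarith

lemma JR_le (n : ℕ) (hn : 1 ≤ n) (u : ℝ) (h0 : 0 < u) (hu : u ≤ 1/2) :
    JR n u ≤ 1/(16 * cJ (n/4) 0 * u^4) := by
  rw [JR_eq n u hn]
  have hS := S_pos (n/4)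
  have hup := DS_upper (n/4) u h0 hu
  have hnn : (0:ℝ) ≤ Complex.normSq (DS (n/4) (eTwoPi u)) := Complex.normSq_nonneg _
  have hsq : (Complex.normSq (DS (n/4) (eTwoPi u)))^2 ≤ (1/(4*u^2))^2 := by nlinarith
  have h2 : (1/(4*u^2))^2 = 1/(16*u^4) := by field_simp; ring
  rw [div_le_div_iff₀ hS (by positivity)]
  calc (Complex.normSq (DS (n/4) (eTwoPi u)))^2 * (16 * cJ (n/4) 0 * u^4)
      ≤ (1/(16*u^4)) * (16 * cJ (n/4) 0 * u^4) := by
        apply mul_le_mul_of_nonneg_right _ (by positivity)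
        rw [← h2]; exact hsq
    _ = 1 * cJ (n/4) 0 := by field_simp
  
lemma JR_cont (n : ℕ) : Continuous (JR n) := by
  unfold JR
  apply Continuous.add continuous_const
  apply continuous_finset_sum
  intro h _
  apply Continuous.mul continuous_const
  apply Continuous.mul continuous_const
  exact (Real.continuous_cos).comp (by continuity)

lemma Gf_cubic (n : ℕ) (hn : 1 ≤ n) (x : ℝ) (h0 : 0 < x) (hx : x ≤ 1/2) :
    |Gf n x| ≤ 1/(48 * cJ (n/4) 0 * x^3) := by
  have hS := S_pos (n/4)
  set S := cJ (n/4) 0 with hSdef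
  -- FTC for Gf
  have ftc : ∫ u in x..(1/2:ℝ), JR n u = Gf n (1/2) - Gf n x := by
    apply intervalIntegral.integral_eq_sub_of_hasDerivAt
    · intro u _
      exact hasDerivAt_Gf n u
    · exact (JR_cont n).intervalIntegrable x (1/2)
  -- FTC for the comparison function
  have hne : ∀ u ∈ Set.uIcc x (1/2:ℝ), u ≠ 0 := by
    intro u hu
    rw [Set.uIcc_of_le hx] at hu
    have := hu.1
    intro hcon
    rw [hcon] at this
    linarith
  have ftc2 : ∫ u in x..(1/2:ℝ), 1/(16 * S * u^4)
      = (-(1/(48*S)) * ((1/2:ℝ))^(-3:ℤ)) - (-(1/(48*S)) * x^(-3:ℤ)) := by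
    apply intervalIntegral.integral_eq_sub_of_hasDerivAt (f := fun u => -(1/(48*S)) * u^(-3:ℤ))
    · intro u hu
      have hu0 : u ≠ 0 := hne u hu
      have hz := hasDerivAt_zpow (-3) u (Or.inl hu0)
      have := hz.const_mul (-(1/(48*S)))
      refine this.congr_deriv ?_
      rw [show ((-3:ℤ):ℝ) = -3 by norm_num]
      rw [show (-3 - 1 : ℤ) = -4 by norm_num]
      rw [zpow_neg, zpow_ofNat]
      field_simp
      ring
    · apply ContinuousOn.intervalIntegrable
      apply ContinuousOn.div continuousOn_const
      · fun_prop
      · intro u hu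
        have := hne u hu
        positivity
  -- compare
  have hmono : ∫ u in x..(1/2:ℝ), JR n u ≤ ∫ u in x..(1/2:ℝ), 1/(16 * S * u^4) := by
    apply intervalIntegral.integral_mono_on hx
    · exact (JR_cont n).intervalIntegrable x (1/2)
    · apply ContinuousOn.intervalIntegrable
      apply ContinuousOn.div continuousOn_const
      · fun_prop
      · intro u hu
        rw [Set.uIcc_of_le hx] at hu
        have : 0 < u := lt_of_lt_of_le h0 hu.1
        positivity
    · intro u hu
      exact JR_le n hn u (lt_of_lt_of_le h0 hu.1) hu.2
  have hGx : Gf n x ≤ 0 := by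
    have := Gf_mono n hn hx
    rw [Gf_half] at this
    exact this
  have habs : |Gf n x| = Gf n (1/2) - Gf n x := by
    rw [Gf_half, abs_of_nonpos hGx]
    ring
  rw [habs, ← ftc]
  calc ∫ u in x..(1/2:ℝ), JR n u ≤ ∫ u in x..(1/2:ℝ), 1/(16 * S * u^4) := hmono
    _ = (-(1/(48*S)) * ((1/2:ℝ))^(-3:ℤ)) - (-(1/(48*S)) * x^(-3:ℤ)) := ftc2
    _ ≤ 1/(48 * S * x^3) := by
        rw [zpow_neg, zpow_neg, zpow_ofNat, zpow_ofNat]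
        have hx3 : (0:ℝ) < x^3 := by positivity
        have e1 : (-(1/(48*S)) * (((1/2:ℝ))^3)⁻¹) ≤ 0 := by
          rw [show ((1/2:ℝ))^3 = 1/8 by norm_num]
          norm_num
          positivity
        have e2 : (-(1/(48*S)) * (x^3)⁻¹) = -(1/(48*S*x^3)) := by
          field_simp
        rw [e2]
        have : (1:ℝ)/(48*S*x^3) = 1/(48*S*x^3) := rfl
        linarith

lemma ml_deg (n l : ℕ) (hn : 1 ≤ n) (hl : l ≤ Nat.log 2 n) : 2 * ml l ≤ n := by
  unfold ml
  split
  · omega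
  · rename_i hl0
    have h1 : 2 * 2^(l-1) = 2^l := by
      rw [← pow_succ']
      congr 1
      omega
    have h2 : (2:ℕ)^l ≤ 2^(Nat.log 2 n) := Nat.pow_le_pow_right (by norm_num) hl
    have h3 := Nat.pow_log_le_self 2 (show n ≠ 0 by omega)
    omega

lemma bsum_eq (n : ℕ) (hn : 1 ≤ n) (t : ℝ) :
    ∑ h ∈ Icc (-(n:ℤ)) n, ((bcoef n h : ℝ) : ℂ) * eTwoPi ((h:ℝ) * t)
      = (((800/((n:ℝ)+1)^2) * ∑ l ∈ range (Nat.log 2 n + 1),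
          Complex.normSq (DS (ml l) (eTwoPi t)) : ℝ) : ℂ) := by
  have hz : ‖eTwoPi t‖ = 1 := eTwoPi_abs t
  calc ∑ h ∈ Icc (-(n:ℤ)) n, ((bcoef n h : ℝ) : ℂ) * eTwoPi ((h:ℝ) * t)
      = ∑ h ∈ Icc (-(n:ℤ)) n, ∑ l ∈ range (Nat.log 2 n + 1),
          (((800/((n:ℝ)+1)^2) : ℝ) : ℂ) * (((qc (ml l) h : ℝ) : ℂ) * (eTwoPi t)^h) := by
        apply Finset.sum_congr rfl
        intro h _
        rw [eTwoPi_int_mul h t]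
        unfold bcoef
        push_cast
        rw [Finset.mul_sum, Finset.sum_mul]
        apply Finset.sum_congr rfl
        intro l _
        ring
    _ = ∑ l ∈ range (Nat.log 2 n + 1), (((800/((n:ℝ)+1)^2) : ℝ) : ℂ) *
          ∑ h ∈ Icc (-(n:ℤ)) n, (((qc (ml l) h : ℝ) : ℂ) * (eTwoPi t)^h) := by
        rw [Finset.sum_comm]
        apply Finset.sum_congr rfl
        intro l _
        rw [Finset.mul_sum]
    _ = ∑ l ∈ range (Nat.log 2 n + 1), (((800/((n:ℝ)+1)^2) : ℝ) : ℂ) *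
          ((Complex.normSq (DS (ml l) (eTwoPi t)) : ℝ) : ℂ) := by
        apply Finset.sum_congr rfl
        intro l hl
        rw [Finset.mem_range] at hl
        rw [qc_sum_eq (ml l) n (ml_deg n l hn (by omega)) (eTwoPi t) hz]
    _ = _ := by
        push_cast
        rw [Finset.mul_sum]

lemma asum_eq (n : ℕ) (hn : 1 ≤ n) (t : ℝ) :
    (sawtooth t : ℂ) - ∑ h ∈ (Icc (-(n:ℤ)) n).erase 0, acoef n h * eTwoPi ((h:ℝ) * t)
      = ((Gf n (Int.fract t) : ℝ) : ℂ) := by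
  set x := Int.fract t with hx
  set S := cJ (n/4) 0 with hS
  have hzx : eTwoPi t = eTwoPi x := eTwoPi_fract t
  have step1 : ∑ h ∈ (Icc (-(n:ℤ)) n).erase 0, acoef n h * eTwoPi ((h:ℝ) * t)
      = ∑ h ∈ Icc (1:ℤ) n, (acoef n h * (eTwoPi x)^h + acoef n (-h) * (eTwoPi x)^(-h)) := by
    rw [← sum_Icc_erase_reflect n (fun h => acoef n h * (eTwoPi x)^h)]
    apply Finset.sum_congr rfl
    intro h _
    rw [eTwoPi_int_mul h t, hzx]
  have pair : ∀ h : ℤ, 1 ≤ h →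
      acoef n h * (eTwoPi x)^h + acoef n (-h) * (eTwoPi x)^(-h)
        = ((-((cJ (n/4) h / S) * (Real.sin (2*π*h*x) / (π*h))) : ℝ) : ℂ) := by
    intro h _
    have hneg : acoef n (-h) = -(acoef n h) := by
      unfold acoef
      rw [cJ_even]
      rw [show (cJ (n/4) h / (cJ (n/4) 0 * (2*π*((-h:ℤ):ℝ))))
          = -(cJ (n/4) h / (cJ (n/4) 0 * (2*π*((h:ℤ):ℝ)))) by
        push_cast
        rw [show cJ (n/4) 0 * (2*π*(-(h:ℝ))) = -(cJ (n/4) 0 * (2*π*(h:ℝ))) by ring]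
        rw [div_neg]]
      push_cast
      ring
    rw [hneg]
    rw [show acoef n h * (eTwoPi x)^h + -(acoef n h) * (eTwoPi x)^(-h)
        = acoef n h * ((eTwoPi x)^h - (eTwoPi x)^(-h)) by ring]
    rw [zpow_sub_conj h x]
    unfold acoef
    rw [← hS]
    rw [show ((cJ (n/4) h / (S * (2*π*(h:ℝ))) : ℝ) : ℂ) * Complex.I *
          (Complex.I * ((2*Real.sin (2*π*(h:ℝ)*x) : ℝ) : ℂ))
        = (Complex.I * Complex.I) * (((cJ (n/4) h / (S * (2*π*(h:ℝ))) : ℝ) : ℂ) *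
            ((2*Real.sin (2*π*(h:ℝ)*x) : ℝ) : ℂ)) by ring]
    rw [Complex.I_mul_I]
    push_cast
    field_simp
  rw [step1, Finset.sum_congr rfl (fun h hh => pair h (by rw [mem_Icc] at hh; exact hh.1))]
  rw [← Complex.ofReal_sum]
  unfold sawtooth Gf
  rw [← hx, ← hS, ← Complex.ofReal_sub]
  congr 1
  rw [Finset.sum_neg_distrib]
  ring

lemma DS_conj (m : ℕ) (z : ℂ) : DS m ((starRingEnd ℂ) z) = (starRingEnd ℂ) (DS m z) := by
  unfold DS
  rw [map_sum]
  exact Finset.sum_congr rfl (fun j _ => (map_zpow₀ (starRingEnd ℂ) z j).symm)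

lemma vcard_nat (n : ℕ) (hn : 1 ≤ n) : n + 1 ≤ 2*(2*(ml (Nat.log 2 n))+1) := by
  set L := Nat.log 2 n with hL
  have hpow : n < 2^(L+1) := Nat.lt_pow_succ_log_self (by norm_num) n
  unfold ml
  split
  · rename_i h0
    rw [h0] at hpow
    norm_num at hpow
    omega
  · rename_i h0
    have he : L - 1 + 2 = L + 1 := by omega
    have h2 : 2^(L+1) = 2^(L-1) * 4 := by
      rw [← he, pow_add]
      norm_num
    omega

lemma v_le (n k : ℕ) (hn : 1 ≤ n) (hk : k ≤ Nat.log 2 n) : 2*(ml k)+1 ≤ n+1 := by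
  have := ml_deg n k hn hk
  omega

lemma v_ratio (l : ℕ) : 2*(ml (l+1))+1 ≤ 3*(2*(ml l)+1) := by
  unfold ml
  cases l with
  | zero => norm_num
  | succ l =>
    simp only [Nat.succ_ne_zero, if_false, Nat.add_sub_cancel]
    have h : (2:ℕ)^(l+1) = 2 * 2^l := by rw [pow_succ]; ring
    omega

lemma tiny_B (A B x : ℝ) (h0 : 0 ≤ x) (h1 : 1/2 < A*x) (h2 : A ≤ 3*B) : 1/6 < B*x := by
  nlinarith

lemma arith_B (nR v S x' : ℝ) (hn1 : 0 < nR) (hv1 : 1 ≤ v) (hS : 0 < S) (hpi : 0 < Real.pi)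
    (hpi315 : Real.pi < 3.15)
    (hSlb : v^3/3 ≤ S) (hMn : nR ≤ 4*v) (hx'pos : 0 < x') (hx'lb : 1/(2*nR) < x') :
    1/(48*S*x'^3) ≤ (800/nR^2)*(1/(9*Real.pi^2*x'^2)) := by
  have hvpos : (0:ℝ) < v := by linarith
  have step1 : nR^3 ≤ 64*v^3 := by
    have h1 : nR^3 ≤ (4*v)^3 := pow_le_pow_left₀ (by positivity) hMn 3
    nlinarith [h1]
  have hp100 : 9*Real.pi^2 ≤ 100 := by nlinarith [hpi315, hpi]
  have step2 : 9*Real.pi^2*nR^3 ≤ 6400*v^3 := by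
    have h1 : 9*Real.pi^2*nR^3 ≤ 100*nR^3 :=
      mul_le_mul_of_nonneg_right hp100 (by positivity)
    nlinarith [h1, step1]
  have step3 : v^3/(6*nR) ≤ S*x' := by
    calc v^3/(6*nR) = (v^3/3) * (1/(2*nR)) := by field_simp; ring
      _ ≤ S * x' := mul_le_mul hSlb (le_of_lt hx'lb) (by positivity) (le_of_lt hS)
  have key : 9*Real.pi^2*nR^2 ≤ 38400*(S*x') := by
    have h3 : 9*Real.pi^2*nR^2*nR ≤ 6400*v^3 := by nlinarith [step2]
    have h4 : 38400*(v^3/(6*nR)) ≤ 38400*(S*x') :=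
      mul_le_mul_of_nonneg_left step3 (by norm_num)
    have h5 : 38400*(v^3/(6*nR)) = 6400*v^3/nR := by field_simp; ring
    have h6 : 9*Real.pi^2*nR^2 ≤ 6400*v^3/nR := by
      rw [le_div_iff₀ hn1]
      nlinarith [h3]
    linarith
  have hr : (800/nR^2)*(1/(9*Real.pi^2*x'^2)) = 800/(9*Real.pi^2*nR^2*x'^2) := by
    rw [div_mul_div_comm, mul_one]
    congr 1
    ring
  rw [hr, div_le_div_iff₀ (by positivity) (by positivity)]
  nlinarith [mul_le_mul_of_nonneg_right key (sq_nonneg x'), sq_nonneg x', hx'pos]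

lemma main_est (n : ℕ) (hn : 1 ≤ n) (t : ℝ) :
    |Gf n (Int.fract t)| ≤ (800/((n:ℝ)+1)^2) * ∑ l ∈ range (Nat.log 2 n + 1),
      Complex.normSq (DS (ml l) (eTwoPi t)) := by
  classical
  set x := Int.fract t with hxdef
  have hx0 : 0 ≤ x := Int.fract_nonneg t
  have hx1 : x < 1 := Int.fract_lt_one t
  have hzt : eTwoPi t = eTwoPi x := eTwoPi_fract t
  obtain ⟨x', hx'0, hx'h, hGeq, hDeq⟩ :
      ∃ x', 0 ≤ x' ∧ x' ≤ 1/2 ∧ |Gf n x| = |Gf n x'| ∧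
        ∀ m : ℕ, Complex.normSq (DS m (eTwoPi t)) = Complex.normSq (DS m (eTwoPi x')) := by
    rcases le_or_gt x (1/2) with hle | hgt
    · exact ⟨x, hx0, hle, rfl, fun m => by rw [hzt]⟩
    · refine ⟨1 - x, by linarith, by linarith, ?_, ?_⟩
      · rw [Gf_symm n x, abs_neg]
      · intro m
        have h1x : eTwoPi (1 - x) = (starRingEnd ℂ) (eTwoPi x) := by
          rw [show (1:ℝ) - x = (((1:ℤ):ℝ)) + (-x) by push_cast; ring, eTwoPi_add,
            eTwoPi_int, one_mul, ← eTwoPi_conj]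
        rw [hzt, h1x, DS_conj, Complex.normSq_conj]
  rw [Finset.sum_congr rfl (fun l _ => hDeq (ml l)), hGeq]
  set L := Nat.log 2 n with hL
  set Y := ∑ l ∈ range (L+1), Complex.normSq (DS (ml l) (eTwoPi x')) with hY
  have hYnn : ∀ l ∈ range (L+1), (0:ℝ) ≤ Complex.normSq (DS (ml l) (eTwoPi x')) :=
    fun l _ => Complex.normSq_nonneg _
  have hn1 : (0:ℝ) < (n:ℝ)+1 := by positivity
  have hpi := Real.pi_pos
  have hpi315 : π < 3.15 := Real.pi_lt_d2
  rcases le_or_gt ((2*((ml L : ℕ):ℝ)+1) * x') (1/2) with hA | hB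
  · -- Case A : near an integer, use the trivial bound 1/2
    have hDA := DS_lower_A (ml L) x' hx'0 hA
    have hsingle : Complex.normSq (DS (ml L) (eTwoPi x')) ≤ Y :=
      Finset.single_le_sum hYnn (by rw [Finset.mem_range]; omega)
    have hvn := vcard_nat n hn
    have hv : ((n:ℝ)+1)/2 ≤ 2*((ml L:ℕ):ℝ)+1 := by
      have hcast : ((n:ℝ)+1) ≤ 2*(2*((ml L:ℕ):ℝ)+1) := by exact_mod_cast hvn
      linarith
    have hGb : |Gf n x'| ≤ 1/2 := Gf_le_half n hn x' hx'0 (by linarith)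
    have hY1 : ((n:ℝ)+1)^2/π^2 ≤ Y := by
      have hq : (4/π^2) * (((n:ℝ)+1)/2)^2 ≤ (4/π^2)*(2*((ml L:ℕ):ℝ)+1)^2 := by
        apply mul_le_mul_of_nonneg_left _ (by positivity)
        nlinarith [hv, hn1]
      calc ((n:ℝ)+1)^2/π^2 = (4/π^2) * (((n:ℝ)+1)/2)^2 := by field_simp; ring
        _ ≤ (4/π^2)*(2*((ml L:ℕ):ℝ)+1)^2 := hq
        _ ≤ Complex.normSq (DS (ml L) (eTwoPi x')) := hDA
        _ ≤ Y := hsingle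
    have hmul : (800/((n:ℝ)+1)^2) * (((n:ℝ)+1)^2/π^2) ≤ (800/((n:ℝ)+1)^2) * Y :=
      mul_le_mul_of_nonneg_left hY1 (by positivity)
    have hconst : (800/((n:ℝ)+1)^2) * (((n:ℝ)+1)^2/π^2) = 800/π^2 := by field_simp
    have h800 : (1:ℝ)/2 ≤ 800/π^2 := by
      rw [div_le_div_iff₀ (by norm_num) (by positivity)]
      nlinarith [hpi315, hpi]
    rw [hconst] at hmul
    linarith
  · -- Case B : away from integers, use the cubic decay
    have hx'pos : 0 < x' := by
      rcases lt_or_eq_of_le hx'0 with h | h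
      · exact h
      · exfalso; rw [← h, mul_zero] at hB; linarith
    have hex : ∃ k, ¬ ((2*((ml k : ℕ):ℝ)+1) * x' ≤ 1/2) := ⟨L, by linarith⟩
    set k := Nat.find hex with hk
    have hkspec : ¬ ((2*((ml k : ℕ):ℝ)+1) * x' ≤ 1/2) := Nat.find_spec hex
    have hkL : k ≤ L := Nat.find_le (by linarith)
    have hk0 : 0 < k := by
      rcases Nat.eq_zero_or_pos k with h0 | h
      · exfalso
        rw [h0] at hkspec
        apply hkspec
        unfold ml
        norm_num
        linarith
      · exact h
    set l := k - 1 with hldef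
    have hlk : l < k := by omega
    have hPl : (2*((ml l : ℕ):ℝ)+1) * x' ≤ 1/2 := by
      have := Nat.find_min hex (hk ▸ hlk)
      exact not_not.mp this
    have hQk : 1/2 < (2*((ml k : ℕ):ℝ)+1) * x' := not_le.mp hkspec
    have hratio : (2*(ml k)+1) ≤ 3*(2*(ml l)+1) := by
      have hkl : k = l + 1 := by omega
      rw [hkl]
      exact v_ratio l
    have hratioR : (2*((ml k : ℕ):ℝ)+1) ≤ 3*(2*((ml l:ℕ):ℝ)+1) := by exact_mod_cast hratio
    have h16 : 1/6 < (2*((ml l : ℕ):ℝ)+1) * x' := tiny_B _ _ _ hx'0 hQk hratioR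
    have hDB := DS_lower_B (ml l) x' hx'pos hx'h h16 hPl
    have hsingle : Complex.normSq (DS (ml l) (eTwoPi x')) ≤ Y :=
      Finset.single_le_sum hYnn (by rw [Finset.mem_range]; omega)
    have hcub := Gf_cubic n hn x' hx'pos hx'h
    set S := cJ (n/4) 0 with hSdef
    have hS := S_pos (n/4)
    set v : ℝ := 2*((n/4 : ℕ):ℝ)+1 with hvdef
    have hv1 : (1:ℝ) ≤ v := by
      rw [hvdef]
      have : (0:ℝ) ≤ ((n/4 : ℕ):ℝ) := Nat.cast_nonneg _
      linarith
    have hvpos : (0:ℝ) < v := by linarith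
    have hSlb : v^3/3 ≤ S := by
      have := S_lb (n/4)
      rw [hvdef]
      exact this
    have hMn : ((n:ℝ)+1) ≤ 4*v := by
      rw [hvdef]
      exact_mod_cast (show n+1 ≤ 4*(2*(n/4)+1) by omega)
    have hvk_le : (2*(ml k)+1) ≤ n+1 := v_le n k hn hkL
    have hvkR : (2*((ml k:ℕ):ℝ)+1) ≤ (n:ℝ)+1 := by exact_mod_cast hvk_le
    have hx'lb : 1/(2*((n:ℝ)+1)) < x' := by
      have h1 : 1/2 < ((n:ℝ)+1)*x' := by
        calc 1/2 < (2*((ml k : ℕ):ℝ)+1) * x' := hQk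
          _ ≤ ((n:ℝ)+1)*x' := mul_le_mul_of_nonneg_right hvkR hx'0
      rw [div_lt_iff₀ (by positivity)]
      have he : x' * (2*((n:ℝ)+1)) = 2*(((n:ℝ)+1)*x') := by ring
      rw [he]
      linarith
    have harith : 1/(48*S*x'^3) ≤ (800/((n:ℝ)+1)^2)*(1/(9*π^2*x'^2)) :=
      arith_B ((n:ℝ)+1) v S x' hn1 hv1 hS hpi hpi315 hSlb hMn hx'pos hx'lb
    calc |Gf n x'| ≤ 1/(48*S*x'^3) := hcub
      _ ≤ (800/((n:ℝ)+1)^2)*(1/(9*π^2*x'^2)) := harith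
      _ ≤ (800/((n:ℝ)+1)^2)*(Complex.normSq (DS (ml l) (eTwoPi x'))) :=
          mul_le_mul_of_nonneg_left hDB (by positivity)
      _ ≤ (800/((n:ℝ)+1)^2)*Y := mul_le_mul_of_nonneg_left hsingle (by positivity)

lemma sum_v (L : ℕ) : (∑ l ∈ range (L+1), (2*(ml l)+1)) + 2 = 2^(L+1) + L + 1 := by
  induction L with
  | zero => simp [ml]
  | succ L ih =>
    rw [Finset.sum_range_succ]
    have hml : ml (L+1) = 2^L := by unfold ml; simp
    rw [hml]
    have h1 : (2:ℕ)^(L+2) = 2*2^(L+1) := by rw [pow_succ]; ring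
    have h2 : (2:ℕ)^(L+1) = 2*2^L := by rw [pow_succ]; ring
    omega

lemma sum_v_le (n : ℕ) (hn : 1 ≤ n) : ∑ l ∈ range (Nat.log 2 n + 1), (2*(ml l)+1) ≤ 3*n := by
  have h1 := sum_v (Nat.log 2 n)
  have hL : Nat.log 2 n < 2^(Nat.log 2 n) := Nat.lt_two_pow_self
  have h2 : 2^(Nat.log 2 n) ≤ n := Nat.pow_log_le_self 2 (by omega)
  have h3 : (2:ℕ)^(Nat.log 2 n + 1) = 2*2^(Nat.log 2 n) := by rw [pow_succ]; ring
  omega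

lemma bcoef_nonneg (n : ℕ) (h : ℤ) : 0 ≤ bcoef n h := by
  unfold bcoef
  exact mul_nonneg (by positivity) (Finset.sum_nonneg (fun l _ => qc_nonneg _ _))

lemma bcoef_le (n : ℕ) (hn : 1 ≤ n) (h : ℤ) : bcoef n h ≤ 2400/((n:ℝ)+1) := by
  unfold bcoef
  have hn1 : (0:ℝ) < (n:ℝ)+1 := by positivity
  have hsum : ∑ l ∈ range (Nat.log 2 n + 1), qc (ml l) h ≤ 3*(n:ℝ) := by
    calc ∑ l ∈ range (Nat.log 2 n + 1), qc (ml l) h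
        ≤ ∑ l ∈ range (Nat.log 2 n + 1), (2*((ml l : ℕ):ℝ)+1) :=
          Finset.sum_le_sum (fun l _ => qc_le _ _)
      _ = ((∑ l ∈ range (Nat.log 2 n + 1), (2*(ml l)+1) : ℕ) : ℝ) := by push_cast; ring
      _ ≤ 3*(n:ℝ) := by exact_mod_cast sum_v_le n hn
  calc (800/((n:ℝ)+1)^2) * ∑ l ∈ range (Nat.log 2 n + 1), qc (ml l) h
      ≤ (800/((n:ℝ)+1)^2) * (3*(n:ℝ)) := by
        apply mul_le_mul_of_nonneg_left hsum (by positivity)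
    _ ≤ 2400/((n:ℝ)+1) := by
        rw [div_mul_eq_mul_div, div_le_div_iff₀ (by positivity) hn1]
        nlinarith [hn1, Nat.cast_nonneg (α := ℝ) n]

lemma acoef_abs (n : ℕ) (h : ℤ) (hh : h ≠ 0) : ‖acoef n h‖ ≤ 1/|(h:ℝ)| := by
  unfold acoef
  rw [norm_mul, Complex.norm_I, mul_one, Complex.norm_real, Real.norm_eq_abs]
  have hS := S_pos (n/4)
  have hc0 : 0 ≤ cJ (n/4) h := cJ_nonneg _ _
  have hcS : cJ (n/4) h ≤ cJ (n/4) 0 := cJ_le_S _ _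
  have hpi3 : (3:ℝ) < π := Real.pi_gt_three
  have hhabs : (1:ℝ) ≤ |(h:ℝ)| := by
    rw [← Int.cast_abs]
    exact_mod_cast (show (1:ℤ) ≤ |h| from Int.one_le_abs hh)
  have hhpos : (0:ℝ) < |(h:ℝ)| := by linarith
  rw [abs_div]
  have hd : |cJ (n/4) 0 * (2*π*(h:ℝ))| = cJ (n/4) 0 * (2*π*|(h:ℝ)|) := by
    rw [abs_mul, abs_of_pos hS, abs_mul, abs_of_pos (show (0:ℝ) < 2*π by linarith)]
  rw [hd, _root_.abs_of_nonneg hc0]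
  rw [div_le_div_iff₀ (by positivity) hhpos]
  have e1 : cJ (n/4) h * |(h:ℝ)| ≤ cJ (n/4) 0 * |(h:ℝ)| :=
    mul_le_mul_of_nonneg_right hcS (le_of_lt hhpos)
  nlinarith [e1, mul_pos hS hhpos]
end Vaaler


/-- Vaaler's approximation: there is an absolute constant `C` such that for any `H ≥ 1`
there are coefficients `a_h` (`0 < |h| ≤ H`) and nonnegative reals `b_h` (`|h| ≤ H`) with
`|ψ(t) - ∑_{0<|h|≤H} a_h e(ht)| ≤ ∑_{|h|≤H} b_h e(ht)` for all `t`,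
`|a_h| ≤ C/|h|` and `b_h ≤ C/H` (the right-hand side being real and nonnegative). -/
theorem vaaler_approximation :
    ∃ C > 0, ∀ H : ℝ, 1 ≤ H → ∃ (a : ℤ → ℂ) (b : ℤ → ℝ),
      (∀ h : ℤ, h ∈ Finset.Icc (-⌊H⌋) ⌊H⌋ → 0 ≤ b h ∧ b h ≤ C / H) ∧
      (∀ h : ℤ, h ∈ (Finset.Icc (-⌊H⌋) ⌊H⌋).erase 0 → ‖a h‖ ≤ C / |(h : ℝ)|) ∧
      (∀ t : ℝ,
        (∑ h ∈ Finset.Icc (-⌊H⌋) ⌊H⌋, (b h : ℂ) * eTwoPi (h * t)).im = 0 ∧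
        ‖(sawtooth t : ℂ) -
            ∑ h ∈ (Finset.Icc (-⌊H⌋) ⌊H⌋).erase 0, a h * eTwoPi (h * t)‖ ≤
          (∑ h ∈ Finset.Icc (-⌊H⌋) ⌊H⌋, (b h : ℂ) * eTwoPi (h * t)).re) := by
  refine ⟨2400, by norm_num, ?_⟩
  intro H hH
  set n : ℕ := ⌊H⌋.toNat with hndef
  have hfl : 1 ≤ ⌊H⌋ := by
    rw [Int.le_floor]
    exact_mod_cast hH
  have hfn : ⌊H⌋ = (n:ℤ) := by omega
  have hn1 : 1 ≤ n := by omega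
  have hHpos : (0:ℝ) < H := by linarith
  have hHn : H < (n:ℝ)+1 := by
    have h1 := Int.lt_floor_add_one H
    have h2 : ((⌊H⌋:ℤ):ℝ) = (n:ℝ) := by rw [hfn]; push_cast; ring
    linarith [h2 ▸ h1]
  refine ⟨Vaaler.acoef n, Vaaler.bcoef n, ?_, ?_, ?_⟩
  · intro h _
    refine ⟨Vaaler.bcoef_nonneg n h, ?_⟩
    calc Vaaler.bcoef n h ≤ 2400/((n:ℝ)+1) := Vaaler.bcoef_le n hn1 h
      _ ≤ 2400/H := by
          apply div_le_div_of_nonneg_left (by norm_num) hHpos (le_of_lt hHn)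
  · intro h hh
    rw [Finset.mem_erase] at hh
    have hhpos : (0:ℝ) < |(h:ℝ)| := by
      have : h ≠ 0 := hh.1
      have : (1:ℝ) ≤ |(h:ℝ)| := by
        rw [← Int.cast_abs]
        exact_mod_cast (show (1:ℤ) ≤ |h| from Int.one_le_abs hh.1)
      linarith
    calc ‖Vaaler.acoef n h‖ ≤ 1/|(h:ℝ)| := Vaaler.acoef_abs n h hh.1
      _ ≤ 2400/|(h:ℝ)| := by
          rw [div_le_div_iff₀ hhpos hhpos]
          nlinarith [hhpos]
  · intro t
    have hIcc : Finset.Icc (-⌊H⌋) ⌊H⌋ = Finset.Icc (-(n:ℤ)) (n:ℤ) := by rw [hfn]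
    rw [hIcc]
    constructor
    · rw [Vaaler.bsum_eq n hn1 t]
      exact Complex.ofReal_im _
    · rw [Vaaler.bsum_eq n hn1 t, Vaaler.asum_eq n hn1 t]
      rw [Complex.norm_real, Real.norm_eq_abs, Complex.ofReal_re]
      exact Vaaler.main_est n hn1 t
end
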